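/- arXiv:1301.2850 — 5 statements merged into one kernel-verified Lean document; each statement's English description precedes it below -/
import Mathlib

section
/- Let B_i ∈ ℂ^{m_i×n} and A_i ∈ ℂ^{m_i×m_i} Hermitian with range(A_i) ⊆ range(B_i) for i = 2, 3 (so each equation B_i·X·B_i* = A_i has a Hermitian solution). Then the pair of equations B_2·X·B_2* = A_2 and B_3·X·B_3* = A_3 have a common Hermitian solution if and only if the rank of the block matrix [[A_2, 0, B_2],[0, -A_3, B_3],[B_2*, B_3*, 0]] equals 2·r([B_2; B_3]) (twice the rank of the column block matrix stacking B_2 over B_3). -/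
open Matrix ComplexOrder

/-- `X` satisfies the four Penrose equations for `A`, i.e. `X` is the
Moore–Penrose inverse of `A`. -/
def IsMP {m n : Type*} [Fintype m] [Fintype n]
    (A : Matrix m n ℂ) (X : Matrix n m ℂ) : Prop :=
  A * X * A = A ∧ X * A * X = X ∧ (A * X)ᴴ = A * X ∧ (X * A)ᴴ = X * A

/-- the number of positive eigenvalues (with multiplicity) of a Hermitian matrix -/
noncomputable def iPos {n : Type*} [Fintype n] [DecidableEq n] {A : Matrix n n ℂ}
    (hA : A.IsHermitian) : ℕ := Nat.card {i // 0 < hA.eigenvalues i}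

/-- the number of negative eigenvalues (with multiplicity) of a Hermitian matrix -/
noncomputable def iNeg {n : Type*} [Fintype n] [DecidableEq n] {A : Matrix n n ℂ}
    (hA : A.IsHermitian) : ℕ := Nat.card {i // hA.eigenvalues i < 0}

set_option maxHeartbeats 1000000
set_option synthInstance.maxHeartbeats 400000

open Matrix ComplexOrder Module

section Pinv

variable {k l : Type*} [Fintype k] [Fintype l] [DecidableEq k] [DecidableEq l]

/-- spectral pseudo-inverse of a Hermitian matrix -/
noncomputable def spinvAux {G : Matrix k k ℂ} (hG : G.IsHermitian) : Matrix k k ℂ :=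
  (hG.eigenvectorUnitary : Matrix k k ℂ) * diagonal (fun i => (hG.eigenvalues i : ℂ)⁻¹) *
    star (hG.eigenvectorUnitary : Matrix k k ℂ)

lemma spinvAux_conjTranspose {G : Matrix k k ℂ} (hG : G.IsHermitian) :
    (spinvAux hG)ᴴ = spinvAux hG := by
  unfold spinvAux
  set U := (hG.eigenvectorUnitary : Matrix k k ℂ)
  have hs : (star fun i => ((hG.eigenvalues i : ℂ))⁻¹) = fun i => ((hG.eigenvalues i : ℂ))⁻¹ := by
    funext i
    simp [Pi.star_apply, Complex.star_def, ← Complex.ofReal_inv, Complex.conj_ofReal]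
  have hd : (diagonal (fun i => (hG.eigenvalues i : ℂ)⁻¹))ᴴ =
      diagonal (fun i => (hG.eigenvalues i : ℂ)⁻¹) := by
    rw [diagonal_conjTranspose, hs]
  simp [conjTranspose_mul, hd, star_eq_conjTranspose, conjTranspose_conjTranspose,
    Matrix.mul_assoc]

lemma spinvAux_mul_self_mul {G : Matrix k k ℂ} (hG : G.IsHermitian) :
    G * spinvAux hG * G = G := by
  have hUU : star (hG.eigenvectorUnitary : Matrix k k ℂ) * (hG.eigenvectorUnitary : Matrix k k ℂ) = 1 :=
    Unitary.coe_star_mul_self hG.eigenvectorUnitary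
  have key : ∀ M : Matrix k k ℂ,
      M = (hG.eigenvectorUnitary : Matrix k k ℂ) * diagonal (RCLike.ofReal ∘ hG.eigenvalues) *
        star (hG.eigenvectorUnitary : Matrix k k ℂ) →
      M * spinvAux hG * M = M := by
    intro M hM
    unfold spinvAux
    set U := (hG.eigenvectorUnitary : Matrix k k ℂ)
    set D := diagonal (RCLike.ofReal ∘ hG.eigenvalues : k → ℂ) with hD
    set D' := diagonal (fun i => (hG.eigenvalues i : ℂ)⁻¹) with hD'
    have hDD : D * D' * D = D := by
      rw [hD, hD', diagonal_mul_diagonal, diagonal_mul_diagonal]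
      refine congrArg diagonal (funext fun i => ?_)
      by_cases h : hG.eigenvalues i = 0
      · simp [h]
      · have hne : (hG.eigenvalues i : ℂ) ≠ 0 := by exact_mod_cast h
        field_simp
        rw [Function.comp_apply, sq]; rfl
    rw [hM]
    calc U * D * star U * (U * D' * star U) * (U * D * star U)
        = U * (D * (star U * U) * D' * (star U * U) * D) * star U := by
          simp only [Matrix.mul_assoc]
      _ = U * (D * D' * D) * star U := by rw [hUU]; simp [Matrix.mul_assoc, Matrix.mul_one]
      _ = U * D * star U := by rw [hDD, Matrix.mul_assoc]
  exact key G hG.spectral_theorem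

/-- a pseudo-inverse of an arbitrary complex matrix -/
noncomputable def pinv (B : Matrix k l ℂ) : Matrix l k ℂ :=
  spinvAux (isHermitian_conjTranspose_mul_self B) * Bᴴ

lemma ext_of_mulVec {p q : Type*} [Fintype q] [DecidableEq q] {A B : Matrix p q ℂ}
    (h : ∀ v, A *ᵥ v = B *ᵥ v) : A = B := by
  ext i j
  have := congrFun (h (Pi.single j 1)) i
  simpa [mulVec_single] using this

lemma pinv_mulVec_eq_zero (B : Matrix k l ℂ) {x : k → ℂ} (hx : Bᴴ *ᵥ x = 0) :
    pinv B *ᵥ x = 0 := by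
  unfold pinv
  rw [← mulVec_mulVec, hx, mulVec_zero]

lemma mul_pinv_mul (B : Matrix k l ℂ) : B * pinv B * B = B := by
  unfold pinv
  apply ext_of_mulVec
  intro v
  set S := spinvAux (isHermitian_conjTranspose_mul_self B)
  have hS : Bᴴ * B * S * (Bᴴ * B) = Bᴴ * B := spinvAux_mul_self_mul _
  have key : (Bᴴ * B) *ᵥ ((S * (Bᴴ * B)) *ᵥ v - v) = 0 := by
    rw [mulVec_sub, mulVec_mulVec, ← Matrix.mul_assoc, Matrix.mul_assoc (Bᴴ * B) S (Bᴴ * B),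
      ← Matrix.mul_assoc (Bᴴ * B) S (Bᴴ * B)]
    rw [hS, sub_self]
  have hker : B *ᵥ ((S * (Bᴴ * B)) *ᵥ v - v) = 0 :=
    (conjTranspose_mul_self_mulVec_eq_zero B _).mp key
  rw [mulVec_sub, sub_eq_zero] at hker
  calc (B * (S * Bᴴ) * B) *ᵥ v
      = B *ᵥ ((S * (Bᴴ * B)) *ᵥ v) := by
        rw [mulVec_mulVec]
        congr 1
        simp only [Matrix.mul_assoc]
    _ = B *ᵥ v := hker

lemma mul_pinv_conjTranspose (B : Matrix k l ℂ) : (B * pinv B)ᴴ = B * pinv B := by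
  unfold pinv
  rw [← Matrix.mul_assoc, conjTranspose_mul, conjTranspose_mul, conjTranspose_conjTranspose,
    spinvAux_conjTranspose, Matrix.mul_assoc]

lemma mul_pinv_cancel_of_range_le {A : Matrix k k ℂ} {B : Matrix k l ℂ}
    (h : LinearMap.range A.mulVecLin ≤ LinearMap.range B.mulVecLin) :
    B * pinv B * A = A := by
  apply ext_of_mulVec
  intro v
  have hmem : A.mulVecLin v ∈ LinearMap.range B.mulVecLin := h ⟨v, rfl⟩
  obtain ⟨y, hy⟩ := hmem
  rw [mulVecLin_apply] at hy
  rw [mulVecLin_apply] at hy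
  calc (B * pinv B * A) *ᵥ v = (B * pinv B) *ᵥ (A *ᵥ v) := (mulVec_mulVec v (B * pinv B) A).symm
    _ = (B * pinv B) *ᵥ (B *ᵥ y) := by rw [hy]
    _ = (B * pinv B * B) *ᵥ y := mulVec_mulVec y (B * pinv B) B
    _ = B *ᵥ y := by rw [mul_pinv_mul]
    _ = A *ᵥ v := hy

lemma sandwich_pinv {A : Matrix k k ℂ} {B : Matrix k l ℂ} (hA : A.IsHermitian)
    (h : LinearMap.range A.mulVecLin ≤ LinearMap.range B.mulVecLin) :
    B * (pinv B * A * (pinv B)ᴴ) * Bᴴ = A := by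
  have h1 : B * pinv B * A = A := mul_pinv_cancel_of_range_le h
  have h2 : A * (B * pinv B) = A := by
    have := congrArg conjTranspose h1
    rw [conjTranspose_mul, mul_pinv_conjTranspose, hA.eq] at this
    exact this
  calc B * (pinv B * A * (pinv B)ᴴ) * Bᴴ
      = (B * pinv B * A) * ((pinv B)ᴴ * Bᴴ) := by simp only [Matrix.mul_assoc]
    _ = A * (B * pinv B)ᴴ := by rw [h1, ← conjTranspose_mul]
    _ = A * (B * pinv B) := by rw [mul_pinv_conjTranspose]
    _ = A := h2

end Pinv

section RankBlock

variable {m' n' : Type*} [Fintype m'] [Fintype n'] [DecidableEq m'] [DecidableEq n']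

lemma memker_block (A : Matrix m' m' ℂ) (B : Matrix m' n' ℂ) (u : (m' ⊕ n') → ℂ) :
    u ∈ LinearMap.ker (fromBlocks A B Bᴴ (0 : Matrix n' n' ℂ)).mulVecLin ↔
      (Bᴴ *ᵥ (u ∘ Sum.inl) = 0 ∧ A *ᵥ (u ∘ Sum.inl) + B *ᵥ (u ∘ Sum.inr) = 0) := by
  rw [LinearMap.mem_ker, mulVecLin_apply, fromBlocks_mulVec]
  constructor
  · intro h
    constructor
    · funext i
      have := congrFun h (Sum.inr i)
      simpa using this
    · funext i
      have := congrFun h (Sum.inl i)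
      simpa using this
  · rintro ⟨h1, h2⟩
    funext i
    cases i with
    | inl i => simpa using congrFun h2 i
    | inr i => simpa using congrFun h1 i

lemma rank_block_iff (A : Matrix m' m' ℂ) (B : Matrix m' n' ℂ) :
    (fromBlocks A B Bᴴ (0 : Matrix n' n' ℂ)).rank = 2 * B.rank ↔
      ∀ x : m' → ℂ, Bᴴ *ᵥ x = 0 → ∃ y, B *ᵥ y = A *ᵥ x := by
  classical
  set M := fromBlocks A B Bᴴ (0 : Matrix n' n' ℂ) with hM
  set V : Submodule ℂ (m' → ℂ) :=
    LinearMap.ker Bᴴ.mulVecLin ⊓ Submodule.comap A.mulVecLin (LinearMap.range B.mulVecLin) with hV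
  set π : (LinearMap.ker M.mulVecLin) →ₗ[ℂ] (m' → ℂ) :=
    (LinearMap.funLeft ℂ ℂ Sum.inl).comp (LinearMap.ker M.mulVecLin).subtype with hπ
  have hrange : LinearMap.range π = V := by
    ext x
    constructor
    · rintro ⟨⟨u, hu⟩, rfl⟩
      rw [memker_block] at hu
      refine ⟨?_, ?_⟩
      · rw [SetLike.mem_coe, LinearMap.mem_ker, mulVecLin_apply]
        exact hu.1
      · rw [SetLike.mem_coe, Submodule.mem_comap, LinearMap.mem_range]
        refine ⟨-(u ∘ Sum.inr), ?_⟩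
        rw [mulVecLin_apply, mulVecLin_apply, mulVec_neg]
        exact neg_eq_of_add_eq_zero_left hu.2
    · rintro ⟨hx1, hx2⟩
      rw [SetLike.mem_coe, Submodule.mem_comap, LinearMap.mem_range] at hx2
      obtain ⟨y, hy⟩ := hx2
      rw [SetLike.mem_coe, LinearMap.mem_ker, mulVecLin_apply] at hx1
      rw [mulVecLin_apply, mulVecLin_apply] at hy
      refine ⟨⟨Sum.elim x (-y), ?_⟩, ?_⟩
      · rw [memker_block]
        constructor
        · simpa using hx1
        · simp only [Sum.elim_comp_inl, Sum.elim_comp_inr, mulVec_neg, hy]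
          abel
      · funext i
        rfl
  have hkerπ : Module.finrank ℂ (LinearMap.ker π) = Module.finrank ℂ (LinearMap.ker B.mulVecLin) := by
    have hmem : ∀ y : LinearMap.ker B.mulVecLin,
        Sum.elim (0 : m' → ℂ) ((y : n' → ℂ)) ∈ LinearMap.ker M.mulVecLin := by
      intro y
      rw [memker_block]
      have hy : B *ᵥ (y : n' → ℂ) = 0 := y.2
      constructor
      · simp
      · simpa using hy
    have hmem2 : ∀ y : LinearMap.ker B.mulVecLin,
        (⟨Sum.elim (0 : m' → ℂ) ((y : n' → ℂ)), hmem y⟩ : LinearMap.ker M.mulVecLin) ∈ LinearMap.ker π := by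
      intro y
      rw [LinearMap.mem_ker]
      funext i
      rfl
    let g : LinearMap.ker B.mulVecLin →ₗ[ℂ] LinearMap.ker π :=
      { toFun := fun y => ⟨⟨Sum.elim (0 : m' → ℂ) ((y : n' → ℂ)), hmem y⟩, hmem2 y⟩
        map_add' := by
          intro a b
          apply Subtype.ext; apply Subtype.ext
          funext i; cases i <;> simp
        map_smul' := by
          intro c a
          apply Subtype.ext; apply Subtype.ext
          funext i; cases i <;> simp }
    have hg : Function.Bijective g := by
      constructor
      · intro a b hab
        apply Subtype.ext
        funext i
        have h' : (Sum.elim (0 : m' → ℂ) ((a : n' → ℂ)) : (m' ⊕ n') → ℂ)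
            = Sum.elim (0 : m' → ℂ) ((b : n' → ℂ)) :=
          congrArg (fun z : LinearMap.ker π => ((z.1 : (m' ⊕ n') → ℂ))) hab
        simpa using congrFun h' (Sum.inr i)
      · rintro ⟨⟨u, hu⟩, hu2⟩
        have hinl : u ∘ Sum.inl = 0 := hu2
        have hB : B *ᵥ (u ∘ Sum.inr) = 0 := by
          have := (memker_block A B u).mp hu
          have h2 := this.2
          rw [hinl] at h2
          simpa using h2
        refine ⟨⟨u ∘ Sum.inr, hB⟩, ?_⟩
        apply Subtype.ext; apply Subtype.ext
        funext i
        cases i with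
        | inl i => exact (congrFun hinl i).symm
        | inr i => rfl
    exact (LinearEquiv.ofBijective g hg).symm.finrank_eq
  have c4 : Module.finrank ℂ (LinearMap.ker M.mulVecLin) =
      Module.finrank ℂ V + Module.finrank ℂ (LinearMap.ker B.mulVecLin) := by
    have := LinearMap.finrank_range_add_finrank_ker π
    rw [hrange, hkerπ] at this
    exact this.symm
  have c1 : M.rank + Module.finrank ℂ (LinearMap.ker M.mulVecLin) = Fintype.card m' + Fintype.card n' := by
    have := LinearMap.finrank_range_add_finrank_ker M.mulVecLin
    rwa [Module.finrank_fintype_fun_eq_card, Fintype.card_sum] at this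
  have c2 : B.rank + Module.finrank ℂ (LinearMap.ker B.mulVecLin) = Fintype.card n' := by
    have := LinearMap.finrank_range_add_finrank_ker B.mulVecLin
    rwa [Module.finrank_fintype_fun_eq_card] at this
  have c3 : B.rank + Module.finrank ℂ (LinearMap.ker Bᴴ.mulVecLin) = Fintype.card m' := by
    have := LinearMap.finrank_range_add_finrank_ker Bᴴ.mulVecLin
    rw [Module.finrank_fintype_fun_eq_card] at this
    rw [← rank_conjTranspose]
    exact this
  have hVle : V ≤ LinearMap.ker Bᴴ.mulVecLin := inf_le_left
  have key : M.rank = 2 * B.rank ↔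
      Module.finrank ℂ V = Module.finrank ℂ (LinearMap.ker Bᴴ.mulVecLin) := by
    constructor <;> intro h <;> omega
  rw [key]
  constructor
  · intro h
    have hVeq : V = LinearMap.ker Bᴴ.mulVecLin :=
      Submodule.eq_of_le_of_finrank_le hVle (le_of_eq h.symm)
    intro x hx
    have hxV : x ∈ V := by
      rw [hVeq, LinearMap.mem_ker, mulVecLin_apply]
      exact hx
    obtain ⟨y, hy⟩ := hxV.2
    rw [mulVecLin_apply, mulVecLin_apply] at hy
    exact ⟨y, hy⟩
  · intro h
    have hVeq : V = LinearMap.ker Bᴴ.mulVecLin := by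
      refine le_antisymm hVle (le_inf le_rfl ?_)
      intro x hx
      rw [LinearMap.mem_ker, mulVecLin_apply] at hx
      obtain ⟨y, hy⟩ := h x hx
      rw [Submodule.mem_comap, LinearMap.mem_range]
      exact ⟨y, by rw [mulVecLin_apply, mulVecLin_apply]; exact hy⟩
    rw [hVeq]

lemma solvable_iff_form (A : Matrix m' m' ℂ) (B : Matrix m' n' ℂ) :
    (∀ x, Bᴴ *ᵥ x = 0 → ∃ y, B *ᵥ y = A *ᵥ x) ↔
      (∀ u u' : m' → ℂ, Bᴴ *ᵥ u = 0 → Bᴴ *ᵥ u' = 0 → star u ⬝ᵥ (A *ᵥ u') = 0) := by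
  constructor
  · intro h u u' hu hu'
    obtain ⟨y, hy⟩ := h u' hu'
    rw [← hy, dotProduct_mulVec]
    have : star u ᵥ* B = star (Bᴴ *ᵥ u) := by
      rw [star_mulVec, conjTranspose_conjTranspose]
    rw [this, hu]
    simp
  · intro h x hx
    set P := B * pinv B with hP
    set E := (1 : Matrix m' m' ℂ) - P with hE
    have hPH : Pᴴ = P := mul_pinv_conjTranspose B
    have hEH : Eᴴ = E := by
      rw [hE, conjTranspose_sub, hPH, conjTranspose_one]
    have hBHE : Bᴴ * E = 0 := by
      have h1 : Bᴴ * P = Bᴴ := by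
        have := congrArg conjTranspose (mul_pinv_mul B)
        rw [conjTranspose_mul, hPH] at this
        exact this
      rw [hE, Matrix.mul_sub, Matrix.mul_one, h1, sub_self]
    have hEfix : ∀ v : m' → ℂ, Bᴴ *ᵥ v = 0 → E *ᵥ v = v := by
      intro v hv
      rw [hE, sub_mulVec, one_mulVec, hP, ← mulVec_mulVec, pinv_mulVec_eq_zero B hv,
        mulVec_zero, sub_zero]
    have hkerE : ∀ v : m' → ℂ, Bᴴ *ᵥ (E *ᵥ v) = 0 := by
      intro v
      rw [mulVec_mulVec, hBHE, zero_mulVec]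
    have key : ∀ w u : m' → ℂ, star w ⬝ᵥ (E *ᵥ u) = star (E *ᵥ w) ⬝ᵥ u := by
      intro w u
      rw [dotProduct_mulVec, star_mulVec, hEH]
    have hwker : Bᴴ *ᵥ (E *ᵥ (A *ᵥ x)) = 0 := hkerE (A *ᵥ x)
    have hww : star (E *ᵥ (A *ᵥ x)) ⬝ᵥ (E *ᵥ (A *ᵥ x)) = 0 := by
      rw [key, hEfix _ hwker]
      exact h _ x hwker hx
    have hw0 : E *ᵥ (A *ᵥ x) = 0 := dotProduct_star_self_eq_zero.mp hww
    refine ⟨pinv B *ᵥ (A *ᵥ x), ?_⟩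
    rw [mulVec_mulVec, ← hP]
    rw [hE, sub_mulVec, one_mulVec, sub_eq_zero] at hw0
    exact hw0.symm

end RankBlock

section FormHelpers

variable {k l : Type*} [Fintype k] [Fintype l]

lemma dot_conj (B : Matrix k l ℂ) (Y : Matrix l l ℂ) (x x' : k → ℂ) :
    star x ⬝ᵥ ((B * Y * Bᴴ) *ᵥ x') = star (Bᴴ *ᵥ x) ⬝ᵥ (Y *ᵥ (Bᴴ *ᵥ x')) := by
  rw [← mulVec_mulVec, ← mulVec_mulVec, dotProduct_mulVec, star_mulVec,
    conjTranspose_conjTranspose]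

lemma conj_sandwich_apply (M : Matrix k l ℂ) (Z : Matrix k k ℂ) (i j : l) :
    (Mᴴ * Z * M) i j = star (fun t => M t i) ⬝ᵥ (Z *ᵥ (fun t => M t j)) := by
  simp only [mul_apply, conjTranspose_apply, dotProduct, mulVec, Pi.star_apply,
    Finset.mul_sum, Finset.sum_mul]
  rw [Finset.sum_comm]
  apply Finset.sum_congr rfl
  intro t _
  apply Finset.sum_congr rfl
  intro s _
  ring

lemma dot_sum_type {p q : Type*} [Fintype p] [Fintype q] (u v : (p ⊕ q) → ℂ) :
    u ⬝ᵥ v = (u ∘ Sum.inl) ⬝ᵥ (v ∘ Sum.inl) + (u ∘ Sum.inr) ⬝ᵥ (v ∘ Sum.inr) := by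
  simp [dotProduct, Fintype.sum_sum_type]

end FormHelpers

section Construction

lemma exists_common_of_form {m2 m3 n : ℕ}
    (A2 : Matrix (Fin m2) (Fin m2) ℂ) (hA2 : A2.IsHermitian)
    (A3 : Matrix (Fin m3) (Fin m3) ℂ) (hA3 : A3.IsHermitian)
    (B2 : Matrix (Fin m2) (Fin n) ℂ) (B3 : Matrix (Fin m3) (Fin n) ℂ)
    (h2 : LinearMap.range A2.mulVecLin ≤ LinearMap.range B2.mulVecLin)
    (h3 : LinearMap.range A3.mulVecLin ≤ LinearMap.range B3.mulVecLin)
    (hC : ∀ (x : Fin m2 → ℂ) (y : Fin m3 → ℂ) (x' : Fin m2 → ℂ) (y' : Fin m3 → ℂ),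
      B2ᴴ *ᵥ x = B3ᴴ *ᵥ y → B2ᴴ *ᵥ x' = B3ᴴ *ᵥ y' →
      star x ⬝ᵥ (A2 *ᵥ x') = star y ⬝ᵥ (A3 *ᵥ y')) :
    ∃ X : Matrix (Fin n) (Fin n) ℂ, X.IsHermitian ∧
      B2 * X * B2ᴴ = A2 ∧ B3 * X * B3ᴴ = A3 := by
  classical
  set S2 : Submodule ℂ (Fin n → ℂ) := LinearMap.range B2ᴴ.mulVecLin with hS2
  set S3 : Submodule ℂ (Fin n → ℂ) := LinearMap.range B3ᴴ.mulVecLin with hS3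
  set N : Submodule ℂ (Fin n → ℂ) := S2 ⊓ S3 with hN
  -- complement of N inside S3
  obtain ⟨K', hK'⟩ := Submodule.exists_isCompl (N.comap S3.subtype)
  set K : Submodule ℂ (Fin n → ℂ) := K'.map S3.subtype with hK
  have hKS3 : K ≤ S3 := Submodule.map_subtype_le _ _
  have hNK_disj : ∀ x, x ∈ N → x ∈ K → x = 0 := by
    intro x hxN hxK
    obtain ⟨z, hz, rfl⟩ := hxK
    have hzc : z ∈ N.comap S3.subtype := by
      rw [Submodule.mem_comap]
      exact hxN
    have : z ∈ (N.comap S3.subtype) ⊓ K' := ⟨hzc, hz⟩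
    rw [hK'.inf_eq_bot] at this
    rw [Submodule.mem_bot] at this
    rw [this]
    rfl
  have hNK_sup : ∀ x ∈ S3, ∃ u ∈ N, ∃ v ∈ K, x = u + v := by
    intro x hx
    have : (⟨x, hx⟩ : S3) ∈ (N.comap S3.subtype) ⊔ K' := by
      rw [hK'.sup_eq_top]
      trivial
    obtain ⟨a, ha, b, hb, hab⟩ := Submodule.mem_sup.mp this
    refine ⟨(a : Fin n → ℂ), ha, (b : Fin n → ℂ), ⟨b, hb, rfl⟩, ?_⟩
    have := congrArg (fun z : S3 => (z : Fin n → ℂ)) hab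
    simpa using this.symm
  obtain ⟨W, hW⟩ := Submodule.exists_isCompl (S2 ⊔ K)
  have hcompl : IsCompl S2 (K ⊔ W) := by
    constructor
    · rw [Submodule.disjoint_def]
      intro x hxS2 hxKW
      obtain ⟨kk, hkk, w, hw', rfl⟩ := Submodule.mem_sup.mp hxKW
      have hwmem : w ∈ (S2 ⊔ K) ⊓ W := by
        constructor
        · have : w = (kk + w) - kk := by abel
          rw [this]
          exact Submodule.sub_mem _ (Submodule.mem_sup_left hxS2) (Submodule.mem_sup_right hkk)
        · exact hw'
      rw [hW.inf_eq_bot, Submodule.mem_bot] at hwmem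
      subst hwmem
      rw [add_zero] at hxS2 ⊢
      exact hNK_disj kk ⟨hxS2, hKS3 hkk⟩ hkk
    · rw [codisjoint_iff, ← sup_assoc]
      exact codisjoint_iff.mp hW.codisjoint
  set prj : (Fin n → ℂ) →ₗ[ℂ] (Fin n → ℂ) :=
    S2.subtype ∘ₗ (S2.projectionOnto (K ⊔ W) hcompl) with hprj
  set Pi2 : Matrix (Fin n) (Fin n) ℂ := LinearMap.toMatrix' prj with hPi2
  have hPim : ∀ v, Pi2 *ᵥ v = prj v := by
    intro v
    have h' : Matrix.toLin' Pi2 v = prj v := by rw [hPi2, Matrix.toLin'_toMatrix']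
    rwa [Matrix.toLin'_apply] at h'
  have p1 : ∀ v ∈ S2, Pi2 *ᵥ v = v := by
    intro v hv
    rw [hPim, hprj]
    simp only [LinearMap.coe_comp, Function.comp_apply, Submodule.coe_subtype]
    rw [show v = ((⟨v, hv⟩ : S2) : Fin n → ℂ) from rfl,
      Submodule.projectionOnto_apply_left]
  have p0 : ∀ v ∈ K, Pi2 *ᵥ v = 0 := by
    intro v hv
    rw [hPim, hprj]
    simp only [LinearMap.coe_comp, Function.comp_apply, Submodule.coe_subtype]
    rw [show v = ((⟨v, Submodule.mem_sup_left hv⟩ : (K ⊔ W : Submodule ℂ _)) : Fin n → ℂ) from rfl,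
      Submodule.projectionOnto_apply_right]
    rfl
  have p2 : ∀ v ∈ S3, Pi2 *ᵥ v ∈ N := by
    intro v hv
    obtain ⟨u, hu, w, hw, rfl⟩ := hNK_sup v hv
    rw [mulVec_add, p1 u hu.1, p0 w hw]
    rw [add_zero]
    exact hu
  -- the two partial Gram solutions
  set Y2 : Matrix (Fin n) (Fin n) ℂ := pinv B2 * A2 * (pinv B2)ᴴ with hY2
  set Y3 : Matrix (Fin n) (Fin n) ℂ := pinv B3 * A3 * (pinv B3)ᴴ with hY3
  have hY2s : B2 * Y2 * B2ᴴ = A2 := by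
    rw [hY2]
    exact sandwich_pinv hA2 h2
  have hY3s : B3 * Y3 * B3ᴴ = A3 := by
    rw [hY3]
    exact sandwich_pinv hA3 h3
  have hY2H : Y2ᴴ = Y2 := by
    rw [hY2, conjTranspose_mul, conjTranspose_mul, conjTranspose_conjTranspose, hA2.eq,
      Matrix.mul_assoc]
  have hY3H : Y3ᴴ = Y3 := by
    rw [hY3, conjTranspose_mul, conjTranspose_mul, conjTranspose_conjTranspose, hA3.eq,
      Matrix.mul_assoc]
  -- the common solution
  set X : Matrix (Fin n) (Fin n) ℂ := Pi2ᴴ * (Y2 - Y3) * Pi2 + Y3 with hX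
  have hXH : X.IsHermitian := by
    rw [Matrix.IsHermitian, hX, conjTranspose_add, conjTranspose_mul, conjTranspose_mul,
      conjTranspose_conjTranspose, conjTranspose_sub, hY2H, hY3H, Matrix.mul_assoc]
  have hPiB2 : Pi2 * B2ᴴ = B2ᴴ := by
    apply ext_of_mulVec
    intro v
    rw [← mulVec_mulVec]
    exact p1 _ ⟨v, by rw [mulVecLin_apply]⟩
  have hB2Pi : B2 * Pi2ᴴ = B2 := by
    have := congrArg conjTranspose hPiB2
    rw [conjTranspose_mul, conjTranspose_conjTranspose] at this
    exact this
  have heq2 : B2 * X * B2ᴴ = A2 := by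
    have expand : B2 * X * B2ᴴ =
        (B2 * Pi2ᴴ) * (Y2 - Y3) * (Pi2 * B2ᴴ) + B2 * Y3 * B2ᴴ := by
      rw [hX]
      simp only [Matrix.mul_add, Matrix.add_mul, Matrix.mul_assoc]
    rw [expand, hB2Pi, hPiB2]
    have : B2 * (Y2 - Y3) * B2ᴴ = B2 * Y2 * B2ᴴ - B2 * Y3 * B2ᴴ := by
      simp only [Matrix.mul_sub, Matrix.sub_mul]
    rw [this, hY2s]
    rw [sub_add_cancel]
  -- form vanishing on N
  have hNform : ∀ u u' : Fin n → ℂ, u ∈ N → u' ∈ N →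
      star u ⬝ᵥ ((Y2 - Y3) *ᵥ u') = 0 := by
    intro u u' hu hu'
    obtain ⟨x, hx⟩ := hu.1
    obtain ⟨y, hy⟩ := hu.2
    obtain ⟨x', hx'⟩ := hu'.1
    obtain ⟨y', hy'⟩ := hu'.2
    rw [mulVecLin_apply] at hx hy hx' hy'
    have e2 : star u ⬝ᵥ (Y2 *ᵥ u') = star x ⬝ᵥ (A2 *ᵥ x') := by
      rw [← hx, ← hx', ← dot_conj, hY2s]
    have e3 : star u ⬝ᵥ (Y3 *ᵥ u') = star y ⬝ᵥ (A3 *ᵥ y') := by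
      rw [← hy, ← hy', ← dot_conj, hY3s]
    have hCrel : star x ⬝ᵥ (A2 *ᵥ x') = star y ⬝ᵥ (A3 *ᵥ y') := by
      apply hC
      · rw [hx, hy]
      · rw [hx', hy']
    rw [sub_mulVec, dotProduct_sub, e2, e3, hCrel, sub_self]
  have heq3 : B3 * X * B3ᴴ = A3 := by
    have expand : B3 * X * B3ᴴ =
        (Pi2 * B3ᴴ)ᴴ * (Y2 - Y3) * (Pi2 * B3ᴴ) + B3 * Y3 * B3ᴴ := by
      rw [hX, conjTranspose_mul, conjTranspose_conjTranspose]
      simp only [Matrix.mul_add, Matrix.add_mul, Matrix.mul_assoc]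
    have hcolmem : ∀ i : Fin m3, (fun t => (Pi2 * B3ᴴ) t i) ∈ N := by
      intro i
      have hcol : (fun t => (Pi2 * B3ᴴ) t i) = Pi2 *ᵥ (fun t => B3ᴴ t i) := by
        funext t
        simp [mul_apply, mulVec, dotProduct]
      rw [hcol]
      apply p2
      refine ⟨Pi.single i 1, ?_⟩
      rw [mulVecLin_apply]
      funext s
      simp [mulVec_single]
    have hzero : (Pi2 * B3ᴴ)ᴴ * (Y2 - Y3) * (Pi2 * B3ᴴ) = 0 := by
      ext i j
      rw [conj_sandwich_apply]
      rw [hNform _ _ (hcolmem i) (hcolmem j)]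
      simp
    rw [expand, hzero, hY3s, zero_add]
  exact ⟨X, hXH, heq2, heq3⟩

end Construction

theorem stmt13 (m2 m3 n : ℕ)
    (A2 : Matrix (Fin m2) (Fin m2) ℂ) (hA2 : A2.IsHermitian)
    (A3 : Matrix (Fin m3) (Fin m3) ℂ) (hA3 : A3.IsHermitian)
    (B2 : Matrix (Fin m2) (Fin n) ℂ) (B3 : Matrix (Fin m3) (Fin n) ℂ)
    (h2 : LinearMap.range A2.mulVecLin ≤ LinearMap.range B2.mulVecLin)
    (h3 : LinearMap.range A3.mulVecLin ≤ LinearMap.range B3.mulVecLin) :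
    (∃ X : Matrix (Fin n) (Fin n) ℂ, X.IsHermitian ∧
        B2 * X * B2ᴴ = A2 ∧ B3 * X * B3ᴴ = A3) ↔
      (fromBlocks (fromBlocks A2 0 0 (-A3)) (fromRows B2 B3)
          (fromCols B2ᴴ B3ᴴ) (0 : Matrix (Fin n) (Fin n) ℂ)).rank
        = 2 * (fromRows B2 B3).rank := by
  have hcol : fromCols B2ᴴ B3ᴴ = (fromRows B2 B3)ᴴ :=
    (conjTranspose_fromRows_eq_fromCols_conjTranspose B2 B3).symm
  rw [hcol, rank_block_iff (fromBlocks A2 0 0 (-A3)) (fromRows B2 B3), solvable_iff_form]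
  -- translate the quadratic-form condition over the sum type to the pair condition
  have bridge : (∀ u u' : (Fin m2 ⊕ Fin m3) → ℂ,
      (fromRows B2 B3)ᴴ *ᵥ u = 0 → (fromRows B2 B3)ᴴ *ᵥ u' = 0 →
      star u ⬝ᵥ ((fromBlocks A2 0 0 (-A3)) *ᵥ u') = 0) ↔
      (∀ (x : Fin m2 → ℂ) (y : Fin m3 → ℂ) (x' : Fin m2 → ℂ) (y' : Fin m3 → ℂ),
        B2ᴴ *ᵥ x = B3ᴴ *ᵥ y → B2ᴴ *ᵥ x' = B3ᴴ *ᵥ y' →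
        star x ⬝ᵥ (A2 *ᵥ x') = star y ⬝ᵥ (A3 *ᵥ y')) := by
    have hker : ∀ u : (Fin m2 ⊕ Fin m3) → ℂ,
        (fromRows B2 B3)ᴴ *ᵥ u = 0 ↔ B2ᴴ *ᵥ (u ∘ Sum.inl) = B3ᴴ *ᵥ (-(u ∘ Sum.inr)) := by
      intro u
      have hu_eq : u = Sum.elim (u ∘ Sum.inl) (u ∘ Sum.inr) := by
        funext i; cases i <;> rfl
      rw [← hcol]
      conv_lhs => rw [hu_eq]
      rw [fromCols_mulVec_sumElim]
      rw [mulVec_neg]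
      constructor
      · intro h
        exact eq_neg_of_add_eq_zero_left h
      · intro h
        rw [h]
        abel
    have hdot : ∀ u u' : (Fin m2 ⊕ Fin m3) → ℂ,
        star u ⬝ᵥ ((fromBlocks A2 0 0 (-A3)) *ᵥ u') =
          star (u ∘ Sum.inl) ⬝ᵥ (A2 *ᵥ (u' ∘ Sum.inl))
            - star (-(u ∘ Sum.inr)) ⬝ᵥ (A3 *ᵥ (-(u' ∘ Sum.inr))) := by
      intro u u'
      rw [fromBlocks_mulVec, dot_sum_type]
      simp only [Sum.elim_comp_inl, Sum.elim_comp_inr]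
      simp [mulVec_neg, neg_mulVec, dotProduct_neg, neg_dotProduct]
      rfl
    constructor
    · intro h x y x' y' hxy hxy'
      have := h (Sum.elim x (-y)) (Sum.elim x' (-y')) ?hk ?hk'
      case hk =>
        rw [hker]
        simpa using hxy
      case hk' =>
        rw [hker]
        simpa using hxy'
      rw [hdot] at this
      simp only [Sum.elim_comp_inl, Sum.elim_comp_inr, neg_neg] at this
      exact sub_eq_zero.mp this
    · intro h u u' hu hu'
      rw [hdot]
      rw [hker] at hu hu'
      rw [sub_eq_zero]
      exact h _ _ _ _ hu hu'
  rw [bridge]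
  constructor
  · rintro ⟨X, hX, hB2, hB3⟩ x y x' y' hxy hxy'
    calc star x ⬝ᵥ (A2 *ᵥ x')
        = star (B2ᴴ *ᵥ x) ⬝ᵥ (X *ᵥ (B2ᴴ *ᵥ x')) := by rw [← hB2, dot_conj]
      _ = star (B3ᴴ *ᵥ y) ⬝ᵥ (X *ᵥ (B3ᴴ *ᵥ y')) := by rw [hxy, hxy']
      _ = star y ⬝ᵥ (A3 *ᵥ y') := by rw [← dot_conj, hB3]
  · intro h
    exact exists_common_of_form A2 hA2 A3 hA3 B2 B3 h2 h3 h
end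

section
/- Let A, B ∈ ℂ^{m×n} such that A·X = B has a Hermitian solution. Then A·X = B has a positive definite Hermitian solution X > 0 if and only if A·B* ≥ 0 and r(A·B*) = r(A). -/
open Matrix ComplexOrder

lemma dot_conj_s15 {m n : ℕ} (G : Matrix (Fin m) (Fin n) ℂ) (Y : Matrix (Fin n) (Fin n) ℂ) (v : Fin m → ℂ) :
    star v ⬝ᵥ ((G * Y * Gᴴ) *ᵥ v) = star (Gᴴ *ᵥ v) ⬝ᵥ (Y *ᵥ (Gᴴ *ᵥ v)) := by
  rw [star_mulVec, conjTranspose_conjTranspose, ← dotProduct_mulVec, mulVec_mulVec,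
    mulVec_mulVec, Matrix.mul_assoc]

set_option maxHeartbeats 1000000 in
lemma core (m n : ℕ) (A B : Matrix (Fin m) (Fin n) ℂ)
    (X0 : Matrix (Fin n) (Fin n) ℂ) (hX0 : X0.IsHermitian) (hB : A * X0 = B)
    (P : Matrix (Fin n) (Fin n) ℂ) (hPP : P * P = P) (hPH : Pᴴ = P) (hAP : A * P = A)
    (hPD : ∀ v : Fin n → ℂ, (∃ w, Aᴴ *ᵥ w = v) → v ≠ 0 → 0 < star v ⬝ᵥ (X0 *ᵥ v))
    (hrangeP : ∀ v : Fin n → ℂ, ∃ w, Aᴴ *ᵥ w = P *ᵥ v) :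
    ∃ X : Matrix (Fin n) (Fin n) ℂ, X.PosDef ∧ A * X = B := by
  set Q : Matrix (Fin n) (Fin n) ℂ := 1 - P with hQdef
  have hPQ1 : P + Q = 1 := by rw [hQdef]; abel
  have hQH : Qᴴ = Q := by
    rw [hQdef, conjTranspose_sub, conjTranspose_one, hPH]
  have hAQ : A * Q = 0 := by
    rw [hQdef, Matrix.mul_sub, Matrix.mul_one, hAP, sub_self]
  have hQP : Q * P = 0 := by
    rw [hQdef, Matrix.sub_mul, Matrix.one_mul, hPP, sub_self]
  have hPQ : P * Q = 0 := by
    rw [hQdef, Matrix.mul_sub, Matrix.mul_one, hPP, sub_self]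
  have hQQ : Q * Q = Q := by
    rw [hQdef, Matrix.mul_sub, Matrix.mul_one, Matrix.sub_mul, Matrix.one_mul, hPP]
    abel
  set Z : Matrix (Fin n) (Fin n) ℂ := P * X0 * P with hZdef
  have hZH : Zᴴ = Z := by
    rw [hZdef]
    simp only [conjTranspose_mul, hPH, hX0.eq, Matrix.mul_assoc]
  have hPZ : P * Z = Z := by
    rw [hZdef, ← Matrix.mul_assoc, ← Matrix.mul_assoc, hPP]
  have hZP : Z * P = Z := by
    rw [hZdef, Matrix.mul_assoc (P * X0), hPP]
  -- dot product identities
  have hZdot : ∀ u : Fin n → ℂ, star u ⬝ᵥ (Z *ᵥ u) = star (P *ᵥ u) ⬝ᵥ (X0 *ᵥ (P *ᵥ u)) := by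
    intro u
    have h := dot_conj_s15 P X0 u
    rw [hPH] at h
    rw [hZdef, h]
  have hZnn : ∀ u : Fin n → ℂ, 0 ≤ star u ⬝ᵥ (Z *ᵥ u) := by
    intro u
    rw [hZdot]
    rcases eq_or_ne (P *ᵥ u) 0 with h | h
    · simp [h]
    · exact le_of_lt (hPD _ (hrangeP u) h)
  have hZzero : ∀ u : Fin n → ℂ, star u ⬝ᵥ (Z *ᵥ u) = 0 → P *ᵥ u = 0 := by
    intro u h
    by_contra hne
    exact (hPD _ (hrangeP u) hne).ne' (by rw [← hZdot u, h])
  have hQdot : ∀ u : Fin n → ℂ, star u ⬝ᵥ (Q *ᵥ u) = star (Q *ᵥ u) ⬝ᵥ (Q *ᵥ u) := by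
    intro u
    have h1 : Q = Q * 1 * Qᴴ := by rw [Matrix.mul_one, hQH, hQQ]
    conv_lhs => rw [h1]
    rw [dot_conj_s15, hQH, one_mulVec]
  -- M := Z + Q is positive definite
  set M : Matrix (Fin n) (Fin n) ℂ := Z + Q with hMdef
  have hMH : Mᴴ = M := by rw [hMdef, conjTranspose_add, hZH, hQH]
  have hMdot : ∀ v : Fin n → ℂ, star v ⬝ᵥ (M *ᵥ v)
      = star v ⬝ᵥ (Z *ᵥ v) + star v ⬝ᵥ (Q *ᵥ v) := by
    intro v
    rw [hMdef, add_mulVec, dotProduct_add]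
  have hM : M.PosDef := by
    refine .of_dotProduct_mulVec_pos hMH fun v hv => ?_
    rw [hMdot]
    rcases (hZnn v).lt_or_eq with ha | ha
    · exact add_pos_of_pos_of_nonneg ha (by rw [hQdot]; exact dotProduct_star_self_nonneg _)
    · have hPv : P *ᵥ v = 0 := hZzero v ha.symm
      have hQv : Q *ᵥ v = v := by
        have := congrArg (fun N => N *ᵥ v) hPQ1
        simpa [add_mulVec, hPv, one_mulVec] using this
      rw [← ha, hQdot, hQv]
      simp only [add_zero, zero_add]
      refine lt_of_le_of_ne (dotProduct_star_self_nonneg _) (fun h => hv ?_)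
      exact dotProduct_star_self_eq_zero.mp h.symm
  have hMdet : IsUnit M.det := hM.det_pos.ne'.isUnit
  have hMMi : M * M⁻¹ = 1 := mul_nonsing_inv M hMdet
  have hMiM : M⁻¹ * M = 1 := nonsing_inv_mul M hMdet
  have hMiH : M⁻¹ᴴ = M⁻¹ := by rw [conjTranspose_nonsing_inv, hMH]
  have hMP : M * P = Z := by
    rw [hMdef, Matrix.add_mul, hQP, add_zero, hZP]
  have hPM : P * M = Z := by
    rw [hMdef, Matrix.mul_add, hPQ, add_zero, hPZ]
  have hZMi : Z * M⁻¹ = P := by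
    rw [← hPM, Matrix.mul_assoc, hMMi, Matrix.mul_one]
  have hMiZ : M⁻¹ * Z = P := by
    rw [← hMP, ← Matrix.mul_assoc, hMiM, Matrix.one_mul]
  have hPMi : P * M⁻¹ = M⁻¹ * P := by
    calc P * M⁻¹ = (M⁻¹ * M) * (P * M⁻¹) := by rw [hMiM, Matrix.one_mul]
      _ = M⁻¹ * ((M * P) * M⁻¹) := by simp only [Matrix.mul_assoc]
      _ = M⁻¹ * ((P * M) * M⁻¹) := by rw [hMP, hPM]
      _ = M⁻¹ * (P * (M * M⁻¹)) := by simp only [Matrix.mul_assoc]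
      _ = M⁻¹ * P := by rw [hMMi, Matrix.mul_one]
  have hYH : (M⁻¹ * P)ᴴ = M⁻¹ * P := by
    rw [conjTranspose_mul, hPH, hMiH, hPMi]
  have hPY : P * (M⁻¹ * P) = M⁻¹ * P := by
    rw [← Matrix.mul_assoc, hPMi, Matrix.mul_assoc, hPP]
  set W : Matrix (Fin n) (Fin n) ℂ := P + Q * X0 * (M⁻¹ * P) with hWdef
  have hWH : Wᴴ = P + (M⁻¹ * P) * X0 * Q := by
    rw [hWdef, conjTranspose_add, hPH]
    simp only [conjTranspose_mul, hQH, hYH, hX0.eq, Matrix.mul_assoc]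
  set X : Matrix (Fin n) (Fin n) ℂ := W * Z * Wᴴ + Q with hXdef
  refine ⟨X, .of_dotProduct_mulVec_pos ?_ ?_, ?_⟩
  · -- Hermitian
    rw [Matrix.IsHermitian, hXdef, conjTranspose_add, hQH]
    simp only [conjTranspose_mul, conjTranspose_conjTranspose, hZH, Matrix.mul_assoc]
  · -- positivity
    intro v hv
    have hXdot : star v ⬝ᵥ (X *ᵥ v)
        = star (Wᴴ *ᵥ v) ⬝ᵥ (Z *ᵥ (Wᴴ *ᵥ v)) + star v ⬝ᵥ (Q *ᵥ v) := by
      rw [hXdef, add_mulVec, dotProduct_add, dot_conj_s15]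
    rw [hXdot]
    rcases (hZnn (Wᴴ *ᵥ v)).lt_or_eq with ha | ha
    · exact add_pos_of_pos_of_nonneg ha (by rw [hQdot]; exact dotProduct_star_self_nonneg _)
    · have hu : P *ᵥ (Wᴴ *ᵥ v) = 0 := hZzero _ ha.symm
      rcases eq_or_ne (Q *ᵥ v) 0 with hq | hq
      · exfalso
        have hPv : P *ᵥ v = v := by
          have := congrArg (fun N => N *ᵥ v) hPQ1
          simpa [add_mulVec, hq, one_mulVec] using this
        have hWv : Wᴴ *ᵥ v = v := by
          rw [hWH, add_mulVec, hPv, ← mulVec_mulVec, hq, mulVec_zero, add_zero]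
        rw [hWv] at hu
        rw [hPv] at hu
        exact hv hu
      · refine add_pos_of_nonneg_of_pos ha.le ?_
        rw [hQdot]
        refine lt_of_le_of_ne (dotProduct_star_self_nonneg _) (fun h => hq ?_)
        exact dotProduct_star_self_eq_zero.mp h.symm
  · -- A * X = B
    have hAW : A * W = A := by
      rw [hWdef, Matrix.mul_add, hAP]
      rw [show A * (Q * X0 * (M⁻¹ * P)) = (A * Q) * (X0 * (M⁻¹ * P)) by
        simp only [Matrix.mul_assoc]]
      rw [hAQ, Matrix.zero_mul, add_zero]
    have hAZ : A * Z = B * P := by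
      rw [hZdef, ← Matrix.mul_assoc, ← Matrix.mul_assoc, hAP, hB]
    have hPXY : P * X0 * (M⁻¹ * P) = P := by
      rw [← hPMi, ← Matrix.mul_assoc, ← hZdef, hZMi]
    have hBY : B * (M⁻¹ * P) = A := by
      rw [← hB, ← hAP]
      calc A * P * X0 * (M⁻¹ * P) = A * (P * X0 * (M⁻¹ * P)) := by
            simp only [Matrix.mul_assoc]
        _ = A * P := by rw [hPXY]
    have h5 : P * ((M⁻¹ * P) * X0 * Q) = (M⁻¹ * P) * X0 * Q := by
      rw [← Matrix.mul_assoc, ← Matrix.mul_assoc, hPY]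
    rw [hXdef, Matrix.mul_add, hAQ, add_zero]
    calc A * (W * Z * Wᴴ) = (A * W) * (Z * Wᴴ) := by simp only [Matrix.mul_assoc]
      _ = A * (Z * Wᴴ) := by rw [hAW]
      _ = (A * Z) * Wᴴ := (Matrix.mul_assoc _ _ _).symm
      _ = B * P * (P + (M⁻¹ * P) * X0 * Q) := by rw [hAZ, hWH]
      _ = B * P * P + B * P * ((M⁻¹ * P) * X0 * Q) := by rw [Matrix.mul_add]
      _ = B * P + B * (P * ((M⁻¹ * P) * X0 * Q)) := by
          rw [Matrix.mul_assoc B P P, hPP, Matrix.mul_assoc]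
      _ = B * P + B * ((M⁻¹ * P) * X0 * Q) := by rw [h5]
      _ = B * P + B * (M⁻¹ * P) * (X0 * Q) := by simp only [Matrix.mul_assoc]
      _ = B * P + A * (X0 * Q) := by rw [hBY]
      _ = B * P + B * Q := by rw [← Matrix.mul_assoc, hB]
      _ = B := by rw [← Matrix.mul_add, hPQ1, Matrix.mul_one]


set_option maxHeartbeats 2000000 in
theorem stmt15 (m n : ℕ) (A B : Matrix (Fin m) (Fin n) ℂ)
    (hcons : ∃ X : Matrix (Fin n) (Fin n) ℂ, X.IsHermitian ∧ A * X = B) :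
    (∃ X : Matrix (Fin n) (Fin n) ℂ, X.PosDef ∧ A * X = B) ↔
      ((A * Bᴴ).PosSemidef ∧ (A * Bᴴ).rank = A.rank) := by
  constructor
  · rintro ⟨X, hX, hAX⟩
    have hBH : Bᴴ = X * Aᴴ := by
      rw [← hAX, conjTranspose_mul, hX.isHermitian.eq]
    have hS : A * Bᴴ = A * X * Aᴴ := by
      rw [hBH]; exact (Matrix.mul_assoc A X Aᴴ).symm
    set s := (open MatrixOrder in CFC.sqrt X) with hs
    have hss : s * s = X := by open MatrixOrder in exact CFC.sqrt_mul_sqrt_self X hX.posSemidef.nonneg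
    have hsH : sᴴ = s := by open MatrixOrder in exact (CFC.sqrt_nonneg X).posSemidef.1
    have hdet : IsUnit s.det := by
      have h2 : s.det * s.det = X.det := by rw [← det_mul, hss]
      have := hX.det_pos.ne'
      exact isUnit_of_mul_isUnit_left (h2 ▸ this.isUnit)
    constructor
    · rw [hS]; exact hX.posSemidef.mul_mul_conjTranspose_same A
    · have h1 : A * Bᴴ = (A * s) * (A * s)ᴴ := by
        rw [hS, conjTranspose_mul, hsH, ← hss]; simp only [← Matrix.mul_assoc]
      rw [h1, rank_self_mul_conjTranspose, rank_mul_eq_left_of_isUnit_det s A hdet]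
  · rintro ⟨hPSD, hrank⟩
    obtain ⟨X0, hX0, hB⟩ := hcons
    -- positivity of X0 on the range of Aᴴ
    have hPD : ∀ v : Fin n → ℂ, (∃ w, Aᴴ *ᵥ w = v) → v ≠ 0 →
        0 < star v ⬝ᵥ (X0 *ᵥ v) := by
      have hS : A * Bᴴ = A * X0 * Aᴴ := by
        rw [← hB, conjTranspose_mul, hX0.eq]; exact (Matrix.mul_assoc A X0 Aᴴ).symm
      -- kernel equality
      have hker : ∀ w : Fin m → ℂ, (A * Bᴴ) *ᵥ w = 0 → Aᴴ *ᵥ w = 0 := by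
        have hle : LinearMap.ker (Aᴴ.mulVecLin) ≤ LinearMap.ker ((A * Bᴴ).mulVecLin) := by
          intro w hw
          simp only [LinearMap.mem_ker, mulVecLin_apply] at hw ⊢
          rw [hS, ← mulVec_mulVec, hw, mulVec_zero]
        have hfr : ∀ (k : ℕ) (C : Matrix (Fin k) (Fin m) ℂ),
            C.rank + Module.finrank ℂ (LinearMap.ker C.mulVecLin) = m := by
          intro k C
          have := LinearMap.finrank_range_add_finrank_ker C.mulVecLin
          simpa [Matrix.rank] using this
        have heq : LinearMap.ker (Aᴴ.mulVecLin) = LinearMap.ker (((A * Bᴴ)).mulVecLin) := by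
          apply Submodule.eq_of_le_of_finrank_le hle
          have h1 := hfr n Aᴴ
          have h2 := hfr m (A * Bᴴ)
          rw [rank_conjTranspose] at h1
          rw [hrank] at h2
          omega
        intro w hw
        have : w ∈ LinearMap.ker (Aᴴ.mulVecLin) := by
          rw [heq]; simpa [LinearMap.mem_ker, mulVecLin_apply] using hw
        simpa [LinearMap.mem_ker, mulVecLin_apply] using this
      rintro v ⟨w, rfl⟩ hv
      have key : star (Aᴴ *ᵥ w) ⬝ᵥ (X0 *ᵥ (Aᴴ *ᵥ w)) = star w ⬝ᵥ ((A * Bᴴ) *ᵥ w) := by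
        rw [hS, dot_conj_s15]
      rw [key]
      rcases (hPSD.dotProduct_mulVec_nonneg w).lt_or_eq with h | h
      · exact h
      · exfalso
        exact hv (hker w ((hPSD.dotProduct_mulVec_zero_iff w).mp h.symm))
    -- construction of the orthogonal projection P onto the range of Aᴴ
    have hH : (Aᴴ * A).IsHermitian := isHermitian_conjTranspose_mul_self A
    set U : Matrix (Fin n) (Fin n) ℂ := (hH.eigenvectorUnitary : Matrix (Fin n) (Fin n) ℂ) with hUdef
    have hU1 : star U * U = 1 := mem_unitaryGroup_iff'.mp hH.eigenvectorUnitary.2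
    have hU2 : U * star U = 1 := mem_unitaryGroup_iff.mp hH.eigenvectorUnitary.2
    set d : Fin n → ℝ := hH.eigenvalues with hddef
    set dd : Fin n → ℂ := fun i => (d i : ℂ) with hdddef
    set e : Fin n → ℂ := fun i => if d i = 0 then 0 else 1 with hedef
    set P : Matrix (Fin n) (Fin n) ℂ := U * diagonal e * star U with hPdef
    have hspec : star U * (Aᴴ * A) * U = diagonal dd := by
      have h := hH.conjStarAlgAut_star_eigenvectorUnitary
      rw [Unitary.conjStarAlgAut_star_apply] at h
      exact h
    -- general sandwich multiplication
    have hmul : ∀ f g : Fin n → ℂ, (U * diagonal f * star U) * (U * diagonal g * star U)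
        = U * diagonal (fun i => f i * g i) * star U := by
      intro f g
      calc (U * diagonal f * star U) * (U * diagonal g * star U)
          = U * diagonal f * (star U * U) * (diagonal g * star U) := by
            simp only [Matrix.mul_assoc]
        _ = U * (diagonal f * diagonal g) * star U := by
            rw [hU1, Matrix.mul_one]; simp only [Matrix.mul_assoc]
        _ = U * diagonal (fun i => f i * g i) * star U := by rw [diagonal_mul_diagonal]
    have hee : (fun i => e i * e i) = e := by
      funext i; by_cases h : d i = 0 <;> simp [hedef, h]
    have hPP : P * P = P := by rw [hPdef, hmul, hee]
    have hPH : Pᴴ = P := by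
      have hse : star e = e := by
        funext i; by_cases h : d i = 0 <;> simp [hedef, h]
      rw [hPdef]
      simp only [conjTranspose_mul, conjTranspose_conjTranspose, diagonal_conjTranspose, hse,
        ← Matrix.star_eq_conjTranspose, Matrix.star_mul, star_star, Matrix.mul_assoc]
      rw [Matrix.star_eq_conjTranspose, diagonal_conjTranspose, hse]
    -- A * P = A
    have hC : (A * U)ᴴ * (A * U) = diagonal dd := by
      rw [← hspec, Matrix.star_eq_conjTranspose]
      simp only [conjTranspose_mul, Matrix.mul_assoc]
    have hcol : ∀ k, d k = 0 → ∀ j, (A * U) j k = 0 := by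
      intro k hk j
      have h0 : star (fun j => (A * U) j k) ⬝ᵥ (fun j => (A * U) j k) = 0 := by
        have := congrFun (congrFun hC k) k
        simpa [Matrix.mul_apply, conjTranspose_apply, dotProduct, hdddef, hk,
          mul_comm] using this
      exact congrFun (dotProduct_star_self_eq_zero.mp h0) j
    have hAP : A * P = A := by
      have h1 : A * U * diagonal e = A * U := by
        ext j k
        rw [mul_diagonal]
        by_cases h : d k = 0
        · rw [hcol k h j]; simp [hedef, h]
        · simp [hedef, h]
      calc A * P = A * U * diagonal e * star U := by
            simp only [hPdef, Matrix.mul_assoc]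
        _ = A * U * star U := by rw [h1]
        _ = A := by rw [Matrix.mul_assoc, hU2, Matrix.mul_one]
    -- range of P inside range of Aᴴ
    have hrangeP : ∀ v : Fin n → ℂ, ∃ w, Aᴴ *ᵥ w = P *ᵥ v := by
      set g : Fin n → ℂ := fun i => if d i = 0 then 0 else (dd i)⁻¹ with hgdef
      have hHspec : Aᴴ * A = U * diagonal dd * star U := by
        rw [← hspec]
        calc Aᴴ * A = (U * star U) * (Aᴴ * A) * (U * star U) := by
              rw [hU2, Matrix.one_mul, Matrix.mul_one]
          _ = U * (star U * (Aᴴ * A) * U) * star U := by simp only [Matrix.mul_assoc]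
      have hdg : (fun i => dd i * g i) = e := by
        funext i
        by_cases h : d i = 0
        · simp [hgdef, hedef, hdddef, h]
        · have hne : (d i : ℂ) ≠ 0 := by exact_mod_cast h
          simp only [hgdef, hedef, hdddef, if_neg h]
          field_simp
      have hPT : P = Aᴴ * (A * (U * diagonal g * star U)) := by
        rw [← Matrix.mul_assoc, hHspec, hmul, hdg, hPdef]
      intro v
      exact ⟨(A * (U * diagonal g * star U)) *ᵥ v, by rw [hPT]; simp only [mulVec_mulVec]⟩
    exact core m n A B X0 hX0 hB P hPP hPH hAP hPD hrangeP
end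

section
/- Let A, B ∈ ℂ^{m×n} such that A·X = B has a Hermitian solution. Then A·X = B has a positive semi-definite Hermitian solution X ≥ 0 if and only if A·B* ≥ 0 and r(A·B*) = r(B). -/
open Matrix ComplexOrder

lemma psd_exists_pinv {k : ℕ} {G : Matrix (Fin k) (Fin k) ℂ} (hG : G.PosSemidef) :
    ∃ Gp : Matrix (Fin k) (Fin k) ℂ, Gp.PosSemidef ∧ G * Gp * G = G := by
  have hH := hG.isHermitian
  set U : Matrix (Fin k) (Fin k) ℂ := (hH.eigenvectorUnitary : Matrix (Fin k) (Fin k) ℂ) with hU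
  have hUU : star U * U = 1 := (Matrix.mem_unitaryGroup_iff').mp hH.eigenvectorUnitary.2
  set D : Matrix (Fin k) (Fin k) ℂ := diagonal (RCLike.ofReal ∘ hH.eigenvalues) with hD
  set D' : Matrix (Fin k) (Fin k) ℂ := diagonal (fun i => ((hH.eigenvalues i)⁻¹ : ℂ)) with hD'
  refine ⟨U * D' * star U, ?_, ?_⟩
  · have hd : (diagonal (fun i => ((hH.eigenvalues i)⁻¹ : ℂ))).PosSemidef := by
      refine posSemidef_diagonal_iff.mpr fun i => ?_
      rw [show ((hH.eigenvalues i)⁻¹ : ℂ) = ((hH.eigenvalues i)⁻¹ : ℝ) by push_cast; ring]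
      exact_mod_cast inv_nonneg.mpr (hG.eigenvalues_nonneg i)
    simpa [Matrix.star_eq_conjTranspose] using hd.mul_mul_conjTranspose_same U
  · have hspec : G = U * D * star U := hH.spectral_theorem
    have hDDD : D * D' * D = D := by
      rw [hD, hD', diagonal_mul_diagonal, diagonal_mul_diagonal]
      refine congrArg diagonal (funext fun i => ?_)
      simp only [Function.comp_apply]
      rcases eq_or_ne (hH.eigenvalues i) 0 with h | h
      · simp [h]
      · field_simp
        exact sq _
    calc G * (U * D' * star U) * G
        = U * (D * D' * D) * star U := by
          rw [hspec]
          simp only [Matrix.mul_assoc]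
          rw [show star U * (U * (D' * (star U * (U * (D * star U))))) =
            (star U * U) * (D' * ((star U * U) * (D * star U))) by
              simp only [Matrix.mul_assoc]]
          rw [hUU]
          simp [Matrix.mul_assoc]
      _ = U * D * star U := by rw [hDDD]
      _ = G := hspec.symm

theorem stmt16 (m n : ℕ) (A B : Matrix (Fin m) (Fin n) ℂ)
    (hcons : ∃ X : Matrix (Fin n) (Fin n) ℂ, X.IsHermitian ∧ A * X = B) :
    (∃ X : Matrix (Fin n) (Fin n) ℂ, X.PosSemidef ∧ A * X = B) ↔
      ((A * Bᴴ).PosSemidef ∧ (A * Bᴴ).rank = B.rank) := by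
  constructor
  · rintro ⟨X, hX, hAX⟩
    open MatrixOrder in
    set Y := CFC.sqrt X with hY
    open MatrixOrder in
    have hYps : Y.PosSemidef := (CFC.sqrt_nonneg X).posSemidef
    open MatrixOrder in
    have hYY : Y * Y = X := CFC.sqrt_mul_sqrt_self X hX.nonneg
    have hBH : Bᴴ = X * Aᴴ := by
      rw [← hAX, conjTranspose_mul, hX.isHermitian.eq]
    have key : A * Bᴴ = (A * Y) * (A * Y)ᴴ := by
      rw [hBH, conjTranspose_mul, hYps.isHermitian.eq, ← hYY]
      simp only [Matrix.mul_assoc]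
    constructor
    · rw [key]; exact posSemidef_self_mul_conjTranspose _
    · have h1 : (A * Bᴴ).rank = (A * Y).rank := by
        rw [key, rank_self_mul_conjTranspose]
      have h2 : B.rank ≤ (A * Y).rank := by
        have : B = (A * Y) * Y := by rw [Matrix.mul_assoc, hYY, hAX]
        rw [this]; exact rank_mul_le_left _ _
      have h3 : (A * Bᴴ).rank ≤ B.rank := by
        have : A * Bᴴ = B * Aᴴ := by
          rw [hBH, ← hAX]; simp only [Matrix.mul_assoc]
        rw [this]; exact rank_mul_le_left _ _
      omega
  · rintro ⟨hPSD, hrank⟩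
    obtain ⟨X₀, hX₀h, hX₀⟩ := hcons
    have hGeq : A * Bᴴ = B * Aᴴ := by
      rw [← hX₀, conjTranspose_mul, hX₀h.eq]
      simp only [Matrix.mul_assoc]
    obtain ⟨Gp, hGp, hGG⟩ := psd_exists_pinv hPSD
    refine ⟨Bᴴ * Gp * B, hGp.conjTranspose_mul_mul_same B, ?_⟩
    have hrange : LinearMap.range (A * Bᴴ).mulVecLin = LinearMap.range B.mulVecLin := by
      have hle : LinearMap.range (A * Bᴴ).mulVecLin ≤ LinearMap.range B.mulVecLin := by
        rw [hGeq, Matrix.mulVecLin_mul]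
        exact LinearMap.range_comp_le_range _ _
      exact Submodule.eq_of_le_of_finrank_le hle (le_of_eq hrank.symm)
    have hfix : ∀ v : Fin n → ℂ, (A * Bᴴ * Gp) *ᵥ (B *ᵥ v) = B *ᵥ v := by
      intro v
      have hmem : B *ᵥ v ∈ LinearMap.range (A * Bᴴ).mulVecLin := by
        rw [hrange]; exact ⟨v, rfl⟩
      obtain ⟨x, hx⟩ := hmem
      rw [mulVecLin_apply] at hx
      rw [← hx, mulVec_mulVec, hGG]
    have hre : A * (Bᴴ * Gp * B) = (A * Bᴴ * Gp) * B := by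
      simp only [Matrix.mul_assoc]
    rw [hre]
    ext i j
    simpa [mulVec, dotProduct, mul_apply, Pi.single_apply] using congrFun (hfix (Pi.single j 1)) i
end

section
/- Assume A·X = B has a Hermitian solution (A, B ∈ ℂ^{m×n}) and let P ∈ ℂ^{n×n} be Hermitian. Then the maximum of r(X - P) over Hermitian solutions X of A·X = B equals r(B - A·P) - r(A) + n, and the minimum equals 2·r(B - A·P) - r(B·A* - A·P·A*). -/
open Matrix ComplexOrder

section Aux

open Module

lemma matrix_eq_zero_of_mulVec {m n : ℕ} (M : Matrix (Fin m) (Fin n) ℂ)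
    (h : ∀ v, M *ᵥ v = 0) : M = 0 := by
  ext i j
  have := congrFun (h (Pi.single j 1)) i
  simpa [Matrix.mulVec_single] using this

lemma udu_mul {n : ℕ} (U : Matrix (Fin n) (Fin n) ℂ)
    (hU : U ∈ Matrix.unitaryGroup (Fin n) ℂ) (a b : Fin n → ℂ) :
    (U * diagonal a * star U) * (U * diagonal b * star U)
      = U * diagonal (fun i => a i * b i) * star U := by
  have h1 : star U * U = 1 := hU.1
  calc (U * diagonal a * star U) * (U * diagonal b * star U)
      = U * (diagonal a * ((star U * U) * diagonal b)) * star U := by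
        simp only [Matrix.mul_assoc]
    _ = U * diagonal (fun i => a i * b i) * star U := by
        rw [h1, Matrix.one_mul, Matrix.diagonal_mul_diagonal]

lemma udu_herm {n : ℕ} (U : Matrix (Fin n) (Fin n) ℂ) (c : Fin n → ℂ)
    (hc : ∀ i, star (c i) = c i) :
    (U * diagonal c * star U).IsHermitian := by
  show _ᴴ = _
  rw [← Matrix.star_eq_conjTranspose, StarMul.star_mul, StarMul.star_mul, star_star]
  have hcc : star c = c := funext hc
  have hst : star (diagonal c) = diagonal c := by
    rw [Matrix.star_eq_conjTranspose, Matrix.diagonal_conjTranspose, hcc]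
  rw [hst, Matrix.mul_assoc]

lemma mp_herm {n : ℕ} (H : Matrix (Fin n) (Fin n) ℂ) (hH : H.IsHermitian) :
    ∃ S, IsMP H S ∧ S.IsHermitian := by
  set U : Matrix (Fin n) (Fin n) ℂ := (hH.eigenvectorUnitary : Matrix (Fin n) (Fin n) ℂ) with hUdef
  have hU : U ∈ Matrix.unitaryGroup (Fin n) ℂ := hH.eigenvectorUnitary.2
  set lam : Fin n → ℝ := hH.eigenvalues with hlam
  have hspec : H = U * diagonal (fun i => (lam i : ℂ)) * star U := by
    have := hH.spectral_theorem
    rw [Unitary.conjStarAlgAut_apply] at this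
    exact this
  refine ⟨U * diagonal (fun i => ((lam i : ℂ))⁻¹) * star U, ⟨?_, ?_, ?_, ?_⟩, ?_⟩
  · rw [hspec, udu_mul U hU, udu_mul U hU]
    congr 2
    funext i j
    rcases eq_or_ne (lam i) 0 with h | h
    · simp [Matrix.diagonal_apply, h]
    · have hne : (lam i : ℂ) ≠ 0 := by exact_mod_cast h
      simp only [Matrix.diagonal_apply]
      split
      · field_simp
      · rfl
  · rw [hspec, udu_mul U hU, udu_mul U hU]
    congr 2
    funext i j
    rcases eq_or_ne (lam i) 0 with h | h
    · simp [Matrix.diagonal_apply, h]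
    · have hne : (lam i : ℂ) ≠ 0 := by exact_mod_cast h
      simp only [Matrix.diagonal_apply]
      split
      · field_simp
      · rfl
  · rw [hspec, udu_mul U hU]
    exact udu_herm U _ (fun i => by simp [Complex.star_def, ← Complex.ofReal_inv,
      Complex.conj_ofReal, _root_.map_mul])
  · rw [hspec, udu_mul U hU]
    exact udu_herm U _ (fun i => by simp [Complex.star_def, ← Complex.ofReal_inv,
      Complex.conj_ofReal, _root_.map_mul])
  · exact udu_herm U _ (fun i => by simp [Complex.star_def, ← Complex.ofReal_inv,
      Complex.conj_ofReal])

lemma exists_mp {m n : ℕ} (A : Matrix (Fin m) (Fin n) ℂ) : ∃ X, IsMP A X := by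
  set H : Matrix (Fin n) (Fin n) ℂ := Aᴴ * A with hHdef
  have hHherm : H.IsHermitian := by
    simpa [hHdef] using Matrix.isHermitian_mul_conjTranspose_self Aᴴ
  obtain ⟨S, ⟨e1, e2, e3, e4⟩, hSh⟩ := mp_herm H hHherm
  have hcomm : S * H = H * S := by
    have h := e4
    rw [Matrix.conjTranspose_mul, hHherm.eq, hSh.eq] at h
    exact h.symm
  have hz : A * (S * H - 1) = 0 := by
    apply matrix_eq_zero_of_mulVec
    intro v
    have hHz : H * (S * H - 1) = 0 := by
      rw [Matrix.mul_sub, Matrix.mul_one, ← Matrix.mul_assoc, e1, sub_self]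
    have h1 : ((S * H - 1) *ᵥ v) ∈ LinearMap.ker H.mulVecLin := by
      simp only [LinearMap.mem_ker, Matrix.mulVecLin_apply, Matrix.mulVec_mulVec, hHz,
        Matrix.zero_mulVec]
    rw [hHdef, Matrix.ker_mulVecLin_conjTranspose_mul_self] at h1
    simpa only [LinearMap.mem_ker, Matrix.mulVecLin_apply, Matrix.mulVec_mulVec] using h1
  have hkey : A * S * H = A := by
    have h := hz
    rw [Matrix.mul_sub, Matrix.mul_one, sub_eq_zero] at h
    rw [Matrix.mul_assoc]
    exact h
  refine ⟨S * Aᴴ, ?_, ?_, ?_, ?_⟩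
  · calc A * (S * Aᴴ) * A = A * S * (Aᴴ * A) := by simp only [Matrix.mul_assoc]
      _ = A := hkey
  · calc S * Aᴴ * A * (S * Aᴴ) = (S * (Aᴴ * A) * S) * Aᴴ := by simp only [Matrix.mul_assoc]
      _ = S * Aᴴ := by rw [← hHdef, e2]
  · calc (A * (S * Aᴴ))ᴴ = A * Sᴴ * Aᴴ := by
          simp only [Matrix.conjTranspose_mul, Matrix.conjTranspose_conjTranspose,
            Matrix.mul_assoc]
      _ = A * (S * Aᴴ) := by rw [hSh.eq, Matrix.mul_assoc]
  · calc (S * Aᴴ * A)ᴴ = (S * H)ᴴ := by rw [Matrix.mul_assoc, ← hHdef]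
      _ = Hᴴ * Sᴴ := Matrix.conjTranspose_mul _ _
      _ = H * S := by rw [hHherm.eq, hSh.eq]
      _ = S * H := hcomm.symm
      _ = S * Aᴴ * A := by rw [Matrix.mul_assoc, ← hHdef]

lemma rank_mul_add_finrank {m n k : ℕ} (A : Matrix (Fin m) (Fin n) ℂ)
    (B : Matrix (Fin n) (Fin k) ℂ) :
    (A * B).rank
      + finrank ℂ ↥(LinearMap.ker A.mulVecLin ⊓ LinearMap.range B.mulVecLin)
      = B.rank := by
  classical
  set W := LinearMap.range B.mulVecLin with hW
  have h := LinearMap.finrank_range_add_finrank_ker (A.mulVecLin.domRestrict W)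
  rw [LinearMap.range_domRestrict, LinearMap.ker_domRestrict] at h
  have h1 : W.map A.mulVecLin = LinearMap.range (A * B).mulVecLin := by
    rw [Matrix.mulVecLin_mul, LinearMap.range_comp]
  have h2 : finrank ℂ ↥((LinearMap.ker A.mulVecLin).comap W.subtype)
      = finrank ℂ ↥(LinearMap.ker A.mulVecLin ⊓ W) := by
    rw [← Submodule.finrank_map_subtype_eq W, Submodule.map_comap_subtype, inf_comm]
  rw [h1, h2] at h
  exact h

lemma rank_sylvester {m n k : ℕ} (A : Matrix (Fin m) (Fin n) ℂ)
    (B : Matrix (Fin n) (Fin k) ℂ) :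
    B.rank + A.rank ≤ (A * B).rank + n := by
  have h := rank_mul_add_finrank A B
  have h2 : finrank ℂ ↥(LinearMap.ker A.mulVecLin ⊓ LinearMap.range B.mulVecLin)
      ≤ finrank ℂ ↥(LinearMap.ker A.mulVecLin) := Submodule.finrank_mono inf_le_left
  have h3 := LinearMap.finrank_range_add_finrank_ker A.mulVecLin
  have h4 : finrank ℂ (Fin n → ℂ) = n := by simp
  have h5 : A.rank = finrank ℂ ↥(LinearMap.range A.mulVecLin) := rfl
  omega

lemma rank_frobenius {m n k l : ℕ} (A : Matrix (Fin m) (Fin n) ℂ)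
    (Y : Matrix (Fin n) (Fin k) ℂ) (Bm : Matrix (Fin k) (Fin l) ℂ) :
    (A * Y).rank + (Y * Bm).rank ≤ Y.rank + (A * (Y * Bm)).rank := by
  have h1 := rank_mul_add_finrank A Y
  have h2 := rank_mul_add_finrank A (Y * Bm)
  have hle : LinearMap.range (Y * Bm).mulVecLin ≤ LinearMap.range Y.mulVecLin := by
    rw [Matrix.mulVecLin_mul]
    exact LinearMap.range_comp_le_range _ _
  have hm : finrank ℂ ↥(LinearMap.ker A.mulVecLin ⊓ LinearMap.range (Y * Bm).mulVecLin)
      ≤ finrank ℂ ↥(LinearMap.ker A.mulVecLin ⊓ LinearMap.range Y.mulVecLin) :=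
    Submodule.finrank_mono (inf_le_inf_left _ hle)
  omega

lemma range_sq_herm {n : ℕ} (S : Matrix (Fin n) (Fin n) ℂ) (hS : S.IsHermitian) :
    LinearMap.range (S * S).mulVecLin = LinearMap.range S.mulVecLin := by
  have hle : LinearMap.range (S * S).mulVecLin ≤ LinearMap.range S.mulVecLin := by
    rw [Matrix.mulVecLin_mul]; exact LinearMap.range_comp_le_range _ _
  refine Submodule.eq_of_le_of_finrank_le hle ?_
  have h : (S * S).rank = S.rank := by
    have hrw : S * S = Sᴴ * S := by rw [hS.eq]
    rw [hrw]
    exact Matrix.rank_conjTranspose_mul_self S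
  exact le_of_eq h.symm

lemma ker_herm_vanish {n : ℕ} (S : Matrix (Fin n) (Fin n) ℂ) (hS : S.IsHermitian)
    (a : Fin n → ℂ) (h : (S * S) *ᵥ a = 0) : S *ᵥ a = 0 := by
  have h1 : a ∈ LinearMap.ker (Sᴴ * S).mulVecLin := by
    rw [hS.eq]
    simpa [LinearMap.mem_ker, Matrix.mulVecLin_apply] using h
  rw [Matrix.ker_mulVecLin_conjTranspose_mul_self] at h1
  simpa [LinearMap.mem_ker, Matrix.mulVecLin_apply] using h1

lemma rank_add_of_orth {n : ℕ} (M₁ M₂ : Matrix (Fin n) (Fin n) ℂ)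
    (h12 : M₁ᴴ * M₂ = 0) (h21 : M₁ * M₂ᴴ = 0) :
    (M₁ + M₂).rank = M₁.rank + M₂.rank := by
  classical
  have hub : (M₁ + M₂).rank ≤ M₁.rank + M₂.rank := by
    have hle : LinearMap.range (M₁ + M₂).mulVecLin
        ≤ LinearMap.range M₁.mulVecLin ⊔ LinearMap.range M₂.mulVecLin := by
      rintro v ⟨a, rfl⟩
      rw [Matrix.mulVecLin_apply, Matrix.add_mulVec]
      exact Submodule.add_mem_sup ⟨a, rfl⟩ ⟨a, rfl⟩
    have h1 := Submodule.finrank_sup_add_finrank_inf_eq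
      (LinearMap.range M₁.mulVecLin) (LinearMap.range M₂.mulVecLin)
    have h2 := Submodule.finrank_mono hle
    have h5 : (M₁ + M₂).rank = finrank ℂ ↥(LinearMap.range (M₁ + M₂).mulVecLin) := rfl
    have h6 : M₁.rank = finrank ℂ ↥(LinearMap.range M₁.mulVecLin) := rfl
    have h7 : M₂.rank = finrank ℂ ↥(LinearMap.range M₂.mulVecLin) := rfl
    omega
  set S₁ := M₁ᴴ * M₁ with hS₁
  set S₂ := M₂ᴴ * M₂ with hS₂
  have hS₁h : S₁.IsHermitian := by
    simpa [hS₁] using Matrix.isHermitian_mul_conjTranspose_self M₁ᴴ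
  have hS₂h : S₂.IsHermitian := by
    simpa [hS₂] using Matrix.isHermitian_mul_conjTranspose_self M₂ᴴ
  have h21' : M₂ᴴ * M₁ = 0 := by
    have := congrArg Matrix.conjTranspose h12
    simpa using this
  have h12' : M₂ * M₁ᴴ = 0 := by
    have := congrArg Matrix.conjTranspose h21
    simpa using this
  have hsum : (M₁ + M₂)ᴴ * (M₁ + M₂) = S₁ + S₂ := by
    rw [Matrix.conjTranspose_add, Matrix.add_mul, Matrix.mul_add, Matrix.mul_add,
      h12, h21']
    simp [hS₁, hS₂]
  have hS12 : S₁ * S₂ = 0 := by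
    calc S₁ * S₂ = M₁ᴴ * (M₁ * M₂ᴴ) * M₂ := by simp only [hS₁, hS₂, Matrix.mul_assoc]
    _ = 0 := by rw [h21]; simp
  have hS21 : S₂ * S₁ = 0 := by
    calc S₂ * S₁ = M₂ᴴ * (M₂ * M₁ᴴ) * M₁ := by simp only [hS₁, hS₂, Matrix.mul_assoc]
    _ = 0 := by rw [h12']; simp
  have hr1 : LinearMap.range S₁.mulVecLin ≤ LinearMap.range (S₁ + S₂).mulVecLin := by
    rw [← range_sq_herm S₁ hS₁h]
    have h : (S₁ + S₂) * S₁ = S₁ * S₁ := by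
      rw [Matrix.add_mul, hS21, add_zero]
    rw [← h, Matrix.mulVecLin_mul]
    exact LinearMap.range_comp_le_range _ _
  have hr2 : LinearMap.range S₂.mulVecLin ≤ LinearMap.range (S₁ + S₂).mulVecLin := by
    rw [← range_sq_herm S₂ hS₂h]
    have h : (S₁ + S₂) * S₂ = S₂ * S₂ := by
      rw [Matrix.add_mul, hS12, zero_add]
    rw [← h, Matrix.mulVecLin_mul]
    exact LinearMap.range_comp_le_range _ _
  have hdisj : LinearMap.range S₁.mulVecLin ⊓ LinearMap.range S₂.mulVecLin = ⊥ := by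
    rw [Submodule.eq_bot_iff]
    rintro v ⟨⟨a, rfl⟩, ⟨b, hb⟩⟩
    simp only [Matrix.mulVecLin_apply] at hb ⊢
    have hz : (S₁ * S₁) *ᵥ a = 0 := by
      have h : S₁ *ᵥ (S₁ *ᵥ a) = S₁ *ᵥ (S₂ *ᵥ b) := by rw [hb]
      rw [Matrix.mulVec_mulVec, Matrix.mulVec_mulVec, hS12, Matrix.zero_mulVec] at h
      exact h
    exact ker_herm_vanish S₁ hS₁h a hz
  have hlb : M₁.rank + M₂.rank ≤ (M₁ + M₂).rank := by
    have e0 : (M₁ + M₂).rank = (S₁ + S₂).rank := by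
      rw [← hsum]; exact (Matrix.rank_conjTranspose_mul_self _).symm
    have e1 : S₁.rank = M₁.rank := Matrix.rank_conjTranspose_mul_self _
    have e2 : S₂.rank = M₂.rank := Matrix.rank_conjTranspose_mul_self _
    have h1 := Submodule.finrank_sup_add_finrank_inf_eq
      (LinearMap.range S₁.mulVecLin) (LinearMap.range S₂.mulVecLin)
    rw [hdisj] at h1
    have h2 : LinearMap.range S₁.mulVecLin ⊔ LinearMap.range S₂.mulVecLin
        ≤ LinearMap.range (S₁ + S₂).mulVecLin := sup_le hr1 hr2
    have h3 := Submodule.finrank_mono h2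
    have h5 : (S₁ + S₂).rank = finrank ℂ ↥(LinearMap.range (S₁ + S₂).mulVecLin) := rfl
    have h6 : S₁.rank = finrank ℂ ↥(LinearMap.range S₁.mulVecLin) := rfl
    have h7 : S₂.rank = finrank ℂ ↥(LinearMap.range S₂.mulVecLin) := rfl
    have h8 : finrank ℂ ↥(⊥ : Submodule ℂ (Fin n → ℂ)) = 0 := finrank_bot ℂ _
    omega
  omega

lemma rank_idem_compl {n : ℕ} (Q : Matrix (Fin n) (Fin n) ℂ) (h : Q * Q = Q) :
    Q.rank + (1 - Q).rank = n := by
  have hrange : LinearMap.range (1 - Q).mulVecLin = LinearMap.ker Q.mulVecLin := by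
    apply le_antisymm
    · rintro v ⟨a, rfl⟩
      simp only [LinearMap.mem_ker, Matrix.mulVecLin_apply, Matrix.mulVec_mulVec]
      rw [Matrix.mul_sub, Matrix.mul_one, h, sub_self, Matrix.zero_mulVec]
    · intro v hv
      simp only [LinearMap.mem_ker, Matrix.mulVecLin_apply] at hv
      exact ⟨v, by simp [Matrix.sub_mulVec, hv]⟩
  have h1 := LinearMap.finrank_range_add_finrank_ker Q.mulVecLin
  have h4 : finrank ℂ (Fin n → ℂ) = n := by simp
  have h5 : Q.rank = finrank ℂ ↥(LinearMap.range Q.mulVecLin) := rfl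
  have h6 : (1 - Q).rank = finrank ℂ ↥(LinearMap.range (1 - Q).mulVecLin) := rfl
  rw [h6, hrange]
  omega

/-- reassociation helper -/
lemma mmoe {a b c d : ℕ} {X : Matrix (Fin a) (Fin b) ℂ} {Y : Matrix (Fin b) (Fin c) ℂ}
    {Z : Matrix (Fin a) (Fin c) ℂ} (h : X * Y = Z) (W : Matrix (Fin c) (Fin d) ℂ) :
    X * (Y * W) = Z * W := by rw [← Matrix.mul_assoc, h]

end Aux

theorem stmt18 (m n : ℕ) (A B : Matrix (Fin m) (Fin n) ℂ)
    (hcons : ∃ X : Matrix (Fin n) (Fin n) ℂ, X.IsHermitian ∧ A * X = B)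
    (P : Matrix (Fin n) (Fin n) ℂ) (hP : P.IsHermitian) :
    IsGreatest {k | ∃ X : Matrix (Fin n) (Fin n) ℂ, X.IsHermitian ∧ A * X = B ∧
        k = (X - P).rank} ((B - A * P).rank + n - A.rank) ∧
    IsLeast {k | ∃ X : Matrix (Fin n) (Fin n) ℂ, X.IsHermitian ∧ A * X = B ∧
        k = (X - P).rank}
      (2 * (B - A * P).rank - (B * Aᴴ - A * P * Aᴴ).rank) := by
  classical
  obtain ⟨X₀, hX₀h, hAX₀⟩ := hcons
  obtain ⟨C, hC⟩ : ∃ C, C = B - A * P := ⟨_, rfl⟩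
  obtain ⟨E, hEdef⟩ : ∃ E, E = B * Aᴴ - A * P * Aᴴ := ⟨_, rfl⟩
  rw [← hC, ← hEdef]
  obtain ⟨Y₀, hY₀def⟩ : ∃ Y₀, Y₀ = X₀ - P := ⟨_, rfl⟩
  have hY₀h : Y₀.IsHermitian := by rw [hY₀def]; exact hX₀h.sub hP
  have hAY₀ : A * Y₀ = C := by rw [hY₀def, Matrix.mul_sub, hAX₀, hC]
  have hEC : E = C * Aᴴ := by rw [hEdef, hC, Matrix.sub_mul]
  obtain ⟨Ap, hap1, hap2, hap3, hap4⟩ := exists_mp A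
  obtain ⟨Q, hQdef⟩ : ∃ Q, Q = Ap * A := ⟨_, rfl⟩
  have hQh : Qᴴ = Q := by rw [hQdef]; exact hap4
  have hQQ : Q * Q = Q := by rw [hQdef, ← Matrix.mul_assoc, hap2]
  have hAQ : A * Q = A := by rw [hQdef, ← Matrix.mul_assoc, hap1]
  have hQAt : Q * Aᴴ = Aᴴ := by
    have h := congrArg Matrix.conjTranspose hAQ
    rw [Matrix.conjTranspose_mul, hQh] at h
    exact h
  -- F₀ and its basic properties
  obtain ⟨F₀, hF₀def⟩ : ∃ F₀, F₀ = Q * Y₀ * Q := ⟨_, rfl⟩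
  have hF₀h : F₀.IsHermitian := by
    rw [hF₀def]
    show _ᴴ = _
    rw [Matrix.conjTranspose_mul, Matrix.conjTranspose_mul, hQh, hY₀h.eq, Matrix.mul_assoc]
  have hQF₀ : Q * F₀ = F₀ := by
    rw [hF₀def]
    simp only [Matrix.mul_assoc, mmoe hQQ]
  have hF₀Q : F₀ * Q = F₀ := by
    rw [hF₀def]
    simp only [Matrix.mul_assoc, hQQ]
  -- G₀ and its basic properties
  obtain ⟨G₀, hG₀def⟩ : ∃ G₀, G₀ = Q * Y₀ - F₀ := ⟨_, rfl⟩
  have hQY₀ : Q * Y₀ = F₀ + G₀ := by rw [hG₀def]; abel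
  have hQG₀ : Q * G₀ = G₀ := by
    rw [hG₀def]
    simp only [Matrix.mul_sub, mmoe hQQ, hQF₀]
  have hG₀Q : G₀ * Q = 0 := by
    rw [hG₀def, Matrix.sub_mul, ← hF₀def, hF₀Q, sub_self]
  have hG₀t : G₀ᴴ = Y₀ * Q - F₀ := by
    rw [hG₀def, Matrix.conjTranspose_sub, Matrix.conjTranspose_mul, hQh, hY₀h.eq, hF₀h.eq]
  have hQG₀t : Q * G₀ᴴ = 0 := by
    rw [hG₀t, Matrix.mul_sub, ← Matrix.mul_assoc, ← hF₀def, hQF₀, sub_self]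
  have hG₀tQ : G₀ᴴ * Q = G₀ᴴ := by
    rw [hG₀t, Matrix.sub_mul, Matrix.mul_assoc, hQQ, hF₀Q]
  have hG₀F₀ : G₀ * F₀ = 0 := by
    calc G₀ * F₀ = G₀ * (Q * F₀) := by rw [hQF₀]
      _ = G₀ * Q * F₀ := by rw [Matrix.mul_assoc]
      _ = 0 := by rw [hG₀Q, Matrix.zero_mul]
  -- the Moore-Penrose inverse of F₀
  obtain ⟨Fp, ⟨f1, f2, f3, f4⟩, hFph⟩ := mp_herm F₀ hF₀h
  obtain ⟨P₁, hP₁def⟩ : ∃ P₁, P₁ = F₀ * Fp := ⟨_, rfl⟩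
  have hF₀Fp : F₀ * Fp = P₁ := hP₁def.symm
  have hFpF₀ : Fp * F₀ = P₁ := by
    have h := f4
    rw [Matrix.conjTranspose_mul, hFph.eq, hF₀h.eq] at h
    rw [← h]
    exact hP₁def.symm
  have hP₁h : P₁ᴴ = P₁ := by rw [hP₁def]; exact f3
  have hP₁F₀ : P₁ * F₀ = F₀ := by rw [hP₁def]; exact f1
  have hF₀P₁ : F₀ * P₁ = F₀ := by
    have h := congrArg Matrix.conjTranspose hP₁F₀
    rw [Matrix.conjTranspose_mul, hF₀h.eq, hP₁h] at h
    exact h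
  have hP₁P₁ : P₁ * P₁ = P₁ := by rw [hP₁def, ← Matrix.mul_assoc, f1]
  have hFpP₁ : Fp * P₁ = Fp := by rw [hP₁def, ← Matrix.mul_assoc, f2]
  have hP₁Fp : P₁ * Fp = Fp := by
    have h := congrArg Matrix.conjTranspose hFpP₁
    rw [Matrix.conjTranspose_mul, hP₁h, hFph.eq] at h
    exact h
  have hQP₁ : Q * P₁ = P₁ := by rw [hP₁def, ← Matrix.mul_assoc, hQF₀]
  have hQFp : Q * Fp = Fp := by
    calc Q * Fp = Q * (P₁ * Fp) := by rw [hP₁Fp]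
      _ = Q * P₁ * Fp := by rw [Matrix.mul_assoc]
      _ = Fp := by rw [hQP₁, hP₁Fp]
  have hFpQ : Fp * Q = Fp := by
    have h := congrArg Matrix.conjTranspose hQFp
    rw [Matrix.conjTranspose_mul, hQh, hFph.eq] at h
    exact h
  have hP₁Q : P₁ * Q = P₁ := by rw [hP₁def, Matrix.mul_assoc, hFpQ]
  have hG₀Fp : G₀ * Fp = 0 := by
    calc G₀ * Fp = G₀ * (Q * Fp) := by rw [hQFp]
      _ = G₀ * Q * Fp := by rw [Matrix.mul_assoc]
      _ = 0 := by rw [hG₀Q, Matrix.zero_mul]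
  have hFpG₀t : Fp * G₀ᴴ = 0 := by
    calc Fp * G₀ᴴ = Fp * Q * G₀ᴴ := by rw [hFpQ]
      _ = Fp * (Q * G₀ᴴ) := by rw [Matrix.mul_assoc]
      _ = 0 := by rw [hQG₀t, Matrix.mul_zero]
  have hF₀G₀t : F₀ * G₀ᴴ = 0 := by
    calc F₀ * G₀ᴴ = F₀ * Q * G₀ᴴ := by rw [hF₀Q]
      _ = F₀ * (Q * G₀ᴴ) := by rw [Matrix.mul_assoc]
      _ = 0 := by rw [hQG₀t, Matrix.mul_zero]
  -- G₂ and its basic properties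
  obtain ⟨G₂, hG₂def⟩ : ∃ G₂, G₂ = G₀ - P₁ * G₀ := ⟨_, rfl⟩
  have hQG₂ : Q * G₂ = G₂ := by
    rw [hG₂def]
    simp only [Matrix.mul_sub, hQG₀, mmoe hQP₁]
  have hG₂Q : G₂ * Q = 0 := by
    simp only [hG₂def, Matrix.sub_mul, Matrix.mul_assoc, hG₀Q, Matrix.mul_zero, sub_zero,
      sub_self]
  have hP₁G₂ : P₁ * G₂ = 0 := by
    simp only [hG₂def, Matrix.mul_sub, mmoe hP₁P₁, sub_self]
  have hFpG₂ : Fp * G₂ = 0 := by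
    simp only [hG₂def, Matrix.mul_sub, mmoe hFpP₁, sub_self]
  have hG₂Fp : G₂ * Fp = 0 := by
    simp only [hG₂def, Matrix.sub_mul, Matrix.mul_assoc, hG₀Fp, Matrix.mul_zero, sub_zero,
      sub_self]
  have hF₀G₂ : F₀ * G₂ = 0 := by
    simp only [hG₂def, Matrix.mul_sub, mmoe hF₀P₁, sub_self]
  have hG₂F₀ : G₂ * F₀ = 0 := by
    simp only [hG₂def, Matrix.sub_mul, Matrix.mul_assoc, hG₀F₀, Matrix.mul_zero, sub_zero,
      sub_self]
  have hG₂t : G₂ᴴ = G₀ᴴ - G₀ᴴ * P₁ := by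
    rw [hG₂def, Matrix.conjTranspose_sub, Matrix.conjTranspose_mul, hP₁h]
  have hQG₂t : Q * G₂ᴴ = 0 := by
    simp only [hG₂t, Matrix.mul_sub, hQG₀t, mmoe hQG₀t, Matrix.zero_mul, sub_zero]
  have hG₂tQ : G₂ᴴ * Q = G₂ᴴ := by
    simp only [hG₂t, Matrix.sub_mul, hG₀tQ, Matrix.mul_assoc, hP₁Q]
  have hG₂G₂ : G₂ * G₂ = 0 := by
    calc G₂ * G₂ = G₂ * (Q * G₂) := by rw [hQG₂]
      _ = G₂ * Q * G₂ := by rw [Matrix.mul_assoc]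
      _ = 0 := by rw [hG₂Q, Matrix.zero_mul]
  have hG₂tG₂t : G₂ᴴ * G₂ᴴ = 0 := by
    have h := congrArg Matrix.conjTranspose hG₂G₂
    rw [Matrix.conjTranspose_mul, Matrix.conjTranspose_zero] at h
    exact h
  have hF₀G₂t : F₀ * G₂ᴴ = 0 := by
    simp only [hG₂t, Matrix.mul_sub, hF₀G₀t, mmoe hF₀G₀t, Matrix.zero_mul, sub_zero]
  -- the Moore-Penrose inverse of G₂
  obtain ⟨G₂p, g1, g2, g3, g4⟩ := exists_mp G₂
  have g4' : G₂ᴴ * G₂pᴴ = G₂p * G₂ := by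
    have h := g4
    rw [Matrix.conjTranspose_mul] at h
    exact h
  have hG₂pfact : G₂p = G₂ᴴ * (G₂pᴴ * G₂p) := by
    calc G₂p = G₂p * G₂ * G₂p := g2.symm
      _ = (G₂ᴴ * G₂pᴴ) * G₂p := by rw [g4']
      _ = G₂ᴴ * (G₂pᴴ * G₂p) := by rw [Matrix.mul_assoc]
  have g1' : G₂ * (G₂p * G₂) = G₂ := by rw [← Matrix.mul_assoc, g1]
  have hQG₂p : Q * G₂p = 0 := by
    calc Q * G₂p = Q * (G₂ᴴ * (G₂pᴴ * G₂p)) := by rw [← hG₂pfact]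
      _ = Q * G₂ᴴ * (G₂pᴴ * G₂p) := by rw [Matrix.mul_assoc]
      _ = 0 := by rw [hQG₂t, Matrix.zero_mul]
  have hF₀G₂p : F₀ * G₂p = 0 := by
    calc F₀ * G₂p = F₀ * (G₂ᴴ * (G₂pᴴ * G₂p)) := by rw [← hG₂pfact]
      _ = F₀ * G₂ᴴ * (G₂pᴴ * G₂p) := by rw [Matrix.mul_assoc]
      _ = 0 := by rw [hF₀G₂t, Matrix.zero_mul]
  -- interactions with A
  have hAF₀ : A * F₀ = C * Q := by
    rw [hF₀def]
    simp only [← Matrix.mul_assoc]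
    rw [hAQ, hAY₀]
  have hAG₀ : A * G₀ = C - C * Q := by
    rw [hG₀def, Matrix.mul_sub, ← Matrix.mul_assoc, hAQ, hAY₀, hAF₀]
  have hAG₀t : A * G₀ᴴ = 0 := by
    rw [hG₀t, Matrix.mul_sub, ← Matrix.mul_assoc, hAY₀, hAF₀, sub_self]
  have hAG₂t : A * G₂ᴴ = 0 := by
    simp only [hG₂t, Matrix.mul_sub, hAG₀t, mmoe hAG₀t, Matrix.zero_mul, sub_zero]
  have hAG₂p : A * G₂p = 0 := by
    calc A * G₂p = A * (G₂ᴴ * (G₂pᴴ * G₂p)) := by rw [← hG₂pfact]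
      _ = A * G₂ᴴ * (G₂pᴴ * G₂p) := by rw [Matrix.mul_assoc]
      _ = 0 := by rw [hAG₂t, Matrix.zero_mul]
  have hAQ1 : A * (1 - Q) = 0 := by
    rw [Matrix.mul_sub, Matrix.mul_one, hAQ, sub_self]
  -- N and T = 1 - N
  obtain ⟨N, hNdef⟩ : ∃ N, N = Fp * G₀ := ⟨_, rfl⟩
  have hNN : N * N = 0 := by
    simp only [hNdef, Matrix.mul_assoc, mmoe hG₀Fp, Matrix.zero_mul, Matrix.mul_zero]
  have hTmul : (1 - N) * (1 + N) = 1 := by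
    have h : (1 - N) * (1 + N) = 1 - N * N := by noncomm_ring
    rw [h, hNN, sub_zero]
  have hTmul' : (1 + N) * (1 - N) = 1 := by
    have h : (1 + N) * (1 - N) = 1 - N * N := by noncomm_ring
    rw [h, hNN, sub_zero]
  have hTunit : IsUnit (1 - N) := ⟨⟨1 - N, 1 + N, hTmul, hTmul'⟩, rfl⟩
  have hTdet : IsUnit (1 - N).det := by
    rw [← Matrix.isUnit_iff_isUnit_det]
    exact hTunit
  have hTtdet : IsUnit ((1 - N)ᴴ).det := by
    rw [Matrix.det_conjTranspose]
    exact hTdet.star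
  have hTt : (1 - N)ᴴ = 1 - G₀ᴴ * Fp := by
    rw [Matrix.conjTranspose_sub, Matrix.conjTranspose_one, hNdef, Matrix.conjTranspose_mul,
      hFph.eq]
  have hrk_conj : ∀ Y : Matrix (Fin n) (Fin n) ℂ, ((1 - N)ᴴ * Y * (1 - N)).rank = Y.rank := by
    intro Y
    rw [Matrix.rank_mul_eq_left_of_isUnit_det (1 - N) ((1 - N)ᴴ * Y) hTdet]
    exact Matrix.rank_mul_eq_right_of_isUnit_det ((1 - N)ᴴ) Y hTtdet
  -- Y_min
  obtain ⟨Ymin, hYmindef⟩ : ∃ Ymin, Ymin = F₀ + G₀ + G₀ᴴ + G₀ᴴ * Fp * G₀ := ⟨_, rfl⟩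
  have hYminH : Ymin.IsHermitian := by
    rw [hYmindef]
    show _ᴴ = _
    simp only [Matrix.conjTranspose_add, Matrix.conjTranspose_mul,
      Matrix.conjTranspose_conjTranspose, hF₀h.eq, hFph.eq, Matrix.mul_assoc]
    abel
  have hAYmin : A * Ymin = C := by
    simp only [hYmindef, Matrix.mul_add, Matrix.mul_assoc, hAF₀, hAG₀, hAG₀t, mmoe hAG₀t,
      Matrix.zero_mul, add_zero]
    abel
  have hZid : (1 - N)ᴴ * Ymin * (1 - N) = F₀ + (G₂ + G₂ᴴ) := by
    rw [hTt, hYmindef, hNdef, hG₂t, hG₂def]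
    simp only [Matrix.mul_add, Matrix.add_mul, Matrix.mul_sub, Matrix.sub_mul,
      Matrix.mul_one, Matrix.one_mul, Matrix.mul_assoc,
      mmoe hF₀Fp, mmoe hFpF₀, mmoe hG₀Fp, mmoe hFpG₀t, mmoe hFpP₁, mmoe hP₁Fp,
      hF₀Fp, hFpF₀, hG₀Fp, hFpG₀t, hFpP₁, hP₁Fp,
      Matrix.zero_mul, Matrix.mul_zero, add_zero, zero_add, sub_zero, zero_sub]
    abel
  -- Rm and Y_max
  obtain ⟨Rm, hRdef⟩ : ∃ Rm, Rm = (1 - Q) - G₂p * G₂ := ⟨_, rfl⟩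
  have hRh : Rmᴴ = Rm := by
    rw [hRdef, Matrix.conjTranspose_sub, Matrix.conjTranspose_sub, Matrix.conjTranspose_one,
      hQh, g4]
  have hARm : A * Rm = 0 := by
    rw [hRdef, Matrix.mul_sub, hAQ1, mmoe hAG₂p, Matrix.zero_mul, sub_zero]
  obtain ⟨Ymax, hYmaxdef⟩ : ∃ Ymax, Ymax = Ymin + Rm := ⟨_, rfl⟩
  have hYmaxH : Ymax.IsHermitian := by
    rw [hYmaxdef]
    exact hYminH.add hRh
  have hAYmax : A * Ymax = C := by
    rw [hYmaxdef, Matrix.mul_add, hAYmin, hARm, add_zero]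
  have hRmN : Rm * N = 0 := by
    simp only [hRdef, hNdef, Matrix.sub_mul, Matrix.one_mul, Matrix.mul_assoc,
      mmoe hQFp, mmoe hG₂Fp, Matrix.zero_mul, Matrix.mul_zero, sub_zero, sub_self]
  have hNtRm : Nᴴ * Rm = 0 := by
    have h := congrArg Matrix.conjTranspose hRmN
    rw [Matrix.conjTranspose_mul, hRh, Matrix.conjTranspose_zero] at h
    exact h
  have hWid : (1 - N)ᴴ * Ymax * (1 - N) = (F₀ + Rm) + (G₂ + G₂ᴴ) := by
    have h1 : (1 - N)ᴴ * Rm * (1 - N) = Rm := by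
      rw [Matrix.conjTranspose_sub, Matrix.conjTranspose_one, Matrix.sub_mul, Matrix.one_mul,
        hNtRm, sub_zero, Matrix.mul_sub, Matrix.mul_one, hRmN, sub_zero]
    calc (1 - N)ᴴ * Ymax * (1 - N)
        = (1 - N)ᴴ * Ymin * (1 - N) + (1 - N)ᴴ * Rm * (1 - N) := by
          rw [hYmaxdef, Matrix.mul_add, Matrix.add_mul]
      _ = (F₀ + (G₂ + G₂ᴴ)) + Rm := by rw [hZid, h1]
      _ = (F₀ + Rm) + (G₂ + G₂ᴴ) := by abel
  -- auxiliary orthogonality for rank additivity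
  have hRmG₂ : Rm * G₂ = 0 := by
    simp only [hRdef, Matrix.sub_mul, Matrix.one_mul, hQG₂, Matrix.mul_assoc, hG₂G₂,
      Matrix.mul_zero, sub_zero, sub_self]
  have hG₂Rm : G₂ * Rm = 0 := by
    simp only [hRdef, Matrix.mul_sub, Matrix.mul_one, hG₂Q, g1', sub_zero, sub_self]
  have hRmG₂t : Rm * G₂ᴴ = 0 := by
    have h := congrArg Matrix.conjTranspose hG₂Rm
    rw [Matrix.conjTranspose_mul, hRh, Matrix.conjTranspose_zero] at h
    exact h
  have hF₀Rm : F₀ * Rm = 0 := by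
    simp only [hRdef, Matrix.mul_sub, Matrix.mul_one, hF₀Q, mmoe hF₀G₂p, Matrix.zero_mul,
      sub_self, sub_zero]
  have hRmGG : Rm * (G₂p * G₂) = 0 := by
    simp only [hRdef, Matrix.sub_mul, Matrix.one_mul, Matrix.mul_assoc, mmoe hQG₂p,
      Matrix.zero_mul, g1', sub_zero, sub_self]
  -- rank identities
  have hZrank : Ymin.rank = F₀.rank + (G₂.rank + G₂.rank) := by
    rw [← hrk_conj Ymin, hZid]
    rw [rank_add_of_orth F₀ (G₂ + G₂ᴴ)
      (by rw [hF₀h.eq, Matrix.mul_add, hF₀G₂, hF₀G₂t, add_zero])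
      (by rw [Matrix.conjTranspose_add, Matrix.conjTranspose_conjTranspose, Matrix.mul_add,
        hF₀G₂t, hF₀G₂, add_zero])]
    rw [rank_add_of_orth G₂ G₂ᴴ hG₂tG₂t
      (by rw [Matrix.conjTranspose_conjTranspose]; exact hG₂G₂)]
    rw [Matrix.rank_conjTranspose]
  have hWrank : Ymax.rank = (F₀.rank + Rm.rank) + (G₂.rank + G₂.rank) := by
    rw [← hrk_conj Ymax, hWid]
    rw [rank_add_of_orth (F₀ + Rm) (G₂ + G₂ᴴ)
      (by rw [Matrix.conjTranspose_add, hF₀h.eq, hRh, Matrix.add_mul, Matrix.mul_add,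
        Matrix.mul_add, hF₀G₂, hF₀G₂t, hRmG₂, hRmG₂t]; simp)
      (by rw [Matrix.conjTranspose_add, Matrix.conjTranspose_conjTranspose, Matrix.add_mul,
        Matrix.mul_add, Matrix.mul_add, hF₀G₂, hF₀G₂t, hRmG₂, hRmG₂t]; simp)]
    rw [rank_add_of_orth F₀ Rm
      (by rw [hF₀h.eq]; exact hF₀Rm)
      (by rw [hRh]; exact hF₀Rm)]
    rw [rank_add_of_orth G₂ G₂ᴴ hG₂tG₂t
      (by rw [Matrix.conjTranspose_conjTranspose]; exact hG₂G₂)]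
    rw [Matrix.rank_conjTranspose]
  have hRmrank : (1 - Q).rank = Rm.rank + G₂.rank := by
    have hsplit : Rm + G₂p * G₂ = 1 - Q := by rw [hRdef]; abel
    have h9 := rank_add_of_orth Rm (G₂p * G₂)
      (by rw [hRh]; exact hRmGG)
      (by rw [g4]; exact hRmGG)
    rw [hsplit] at h9
    have h10 : (G₂p * G₂).rank = G₂.rank := by
      refine le_antisymm (Matrix.rank_mul_le_right _ _) ?_
      calc G₂.rank = (G₂ * (G₂p * G₂)).rank := by rw [g1']
        _ ≤ (G₂p * G₂).rank := Matrix.rank_mul_le_right _ _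
    rw [h10] at h9
    exact h9
  have hQrank : Q.rank = A.rank := by
    refine le_antisymm ?_ ?_
    · rw [hQdef]; exact Matrix.rank_mul_le_right Ap A
    · calc A.rank = (A * Q).rank := by rw [hAQ]
        _ ≤ Q.rank := Matrix.rank_mul_le_right A Q
  have hQn : Q.rank + (1 - Q).rank = n := rank_idem_compl Q hQQ
  have hCrank : C.rank = F₀.rank + G₂.rank := by
    have hADC : A * (F₀ + G₀) = C := by
      rw [Matrix.mul_add, hAF₀, hAG₀]; abel
    have hApC : Ap * C = F₀ + G₀ := by
      rw [← hAY₀, ← Matrix.mul_assoc, ← hQdef, hQY₀]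
    have h1 : C.rank = (F₀ + G₀).rank := by
      refine le_antisymm ?_ ?_
      · calc C.rank = (A * (F₀ + G₀)).rank := by rw [hADC]
          _ ≤ (F₀ + G₀).rank := Matrix.rank_mul_le_right _ _
      · calc (F₀ + G₀).rank = (Ap * C).rank := by rw [hApC]
          _ ≤ C.rank := Matrix.rank_mul_le_right _ _
    have h3 : (F₀ + G₀) * (1 - N) = F₀ + G₂ := by
      rw [hNdef, hG₂def]
      simp only [Matrix.add_mul, Matrix.mul_sub, Matrix.mul_one, Matrix.mul_assoc,
        mmoe hF₀Fp, mmoe hG₀Fp, hF₀Fp, hG₀Fp, Matrix.zero_mul, sub_zero]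
      abel
    have h2 : ((F₀ + G₀) * (1 - N)).rank = (F₀ + G₀).rank :=
      Matrix.rank_mul_eq_left_of_isUnit_det _ _ hTdet
    have h4 := rank_add_of_orth F₀ G₂ (by rw [hF₀h.eq]; exact hF₀G₂) hF₀G₂t
    rw [h1, ← h2, h3, h4]
  have hErank : E.rank = F₀.rank := by
    have hAFA : A * F₀ * Aᴴ = E := by
      rw [hAF₀, Matrix.mul_assoc, hQAt, ← hEC]
    have hApC : Ap * C = F₀ + G₀ := by
      rw [← hAY₀, ← Matrix.mul_assoc, ← hQdef, hQY₀]
    have h5 : Ap * E * Apᴴ = F₀ := by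
      rw [hEC, ← Matrix.mul_assoc, hApC, Matrix.mul_assoc]
      have h6 : Aᴴ * Apᴴ = Q := by
        rw [← Matrix.conjTranspose_mul, ← hQdef, hQh]
      rw [h6, Matrix.add_mul, hF₀Q, hG₀Q, add_zero]
    refine le_antisymm ?_ ?_
    · calc E.rank = (A * F₀ * Aᴴ).rank := by rw [hAFA]
        _ ≤ (A * F₀).rank := Matrix.rank_mul_le_left _ _
        _ ≤ F₀.rank := Matrix.rank_mul_le_right _ _
    · calc F₀.rank = (Ap * E * Apᴴ).rank := by rw [h5]
        _ ≤ (Ap * E).rank := Matrix.rank_mul_le_left _ _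
        _ ≤ E.rank := Matrix.rank_mul_le_right _ _
  have hAn : A.rank ≤ n := by
    have := Matrix.rank_le_card_width A
    simpa using this
  -- bounds for arbitrary solutions
  have hub : ∀ k ∈ {k | ∃ X : Matrix (Fin n) (Fin n) ℂ, X.IsHermitian ∧ A * X = B ∧
      k = (X - P).rank}, k ≤ C.rank + n - A.rank := by
    rintro k ⟨X, hXh, hAX, rfl⟩
    have hAY : A * (X - P) = C := by rw [Matrix.mul_sub, hAX, hC]
    have h := rank_sylvester A (X - P)
    rw [hAY] at h
    omega
  have hlb : ∀ k ∈ {k | ∃ X : Matrix (Fin n) (Fin n) ℂ, X.IsHermitian ∧ A * X = B ∧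
      k = (X - P).rank}, 2 * C.rank - E.rank ≤ k := by
    rintro k ⟨X, hXh, hAX, rfl⟩
    have hAY : A * (X - P) = C := by rw [Matrix.mul_sub, hAX, hC]
    have hXPh : (X - P).IsHermitian := hXh.sub hP
    have h := rank_frobenius A (X - P) Aᴴ
    have h1 : (X - P) * Aᴴ = Cᴴ := by
      have h2 := congrArg Matrix.conjTranspose hAY
      rw [Matrix.conjTranspose_mul, hXPh.eq] at h2
      exact h2
    have h2 : A * ((X - P) * Aᴴ) = E := by
      rw [← Matrix.mul_assoc, hAY, ← hEC]
    rw [h2, h1, hAY, Matrix.rank_conjTranspose] at h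
    omega
  constructor
  · constructor
    · refine ⟨Ymax + P, hYmaxH.add hP, ?_, ?_⟩
      · rw [Matrix.mul_add, hAYmax, hC]
        abel
      · rw [add_sub_cancel_right]
        omega
    · exact hub
  · constructor
    · refine ⟨Ymin + P, hYminH.add hP, ?_, ?_⟩
      · rw [Matrix.mul_add, hAYmin, hC]
        abel
      · rw [add_sub_cancel_right]
        omega
    · exact hlb
end

section
/- Assume A·X = B has a Hermitian solution (A, B ∈ ℂ^{m×n}) and let P ∈ ℂ^{n×n} be Hermitian. Then there exists a Hermitian solution X of A·X = B with X ≥ P if and only if range(B - A·P) = range(B·A* - A·P·A*) and B·A* - A·P·A* ≥ 0. -/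
open Matrix ComplexOrder

lemma eq_of_mulVec_eq {a b : ℕ} {M N : Matrix (Fin a) (Fin b) ℂ}
    (h : ∀ v, M *ᵥ v = N *ᵥ v) : M = N := by
  ext i j
  have := congr_fun (h (Pi.single j 1)) i
  simpa [Matrix.mulVec_single_one] using this

lemma range_mul_conjTranspose_self {a b : ℕ} (M : Matrix (Fin a) (Fin b) ℂ) :
    LinearMap.range (M * Mᴴ).mulVecLin = LinearMap.range M.mulVecLin := by
  have hle : LinearMap.range (M * Mᴴ).mulVecLin ≤ LinearMap.range M.mulVecLin := by
    rw [Matrix.mulVecLin_mul]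
    exact LinearMap.range_comp_le_range _ _
  refine Submodule.eq_of_le_of_finrank_le hle ?_
  have : (M * Mᴴ).rank = M.rank := Matrix.rank_self_mul_conjTranspose M
  simpa [Matrix.rank] using this.ge

theorem stmt19 (m n : ℕ) (A B : Matrix (Fin m) (Fin n) ℂ)
    (hcons : ∃ X : Matrix (Fin n) (Fin n) ℂ, X.IsHermitian ∧ A * X = B)
    (P : Matrix (Fin n) (Fin n) ℂ) (hP : P.IsHermitian) :
    (∃ X : Matrix (Fin n) (Fin n) ℂ, X.IsHermitian ∧ A * X = B ∧
        (X - P).PosSemidef) ↔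
      (LinearMap.range (B - A * P).mulVecLin
          = LinearMap.range (B * Aᴴ - A * P * Aᴴ).mulVecLin ∧
        (B * Aᴴ - A * P * Aᴴ).PosSemidef) := by
  have hD' : B * Aᴴ - A * P * Aᴴ = (B - A * P) * Aᴴ := by rw [Matrix.sub_mul]
  constructor
  · rintro ⟨X, hX, hAX, hY⟩
    set Y := X - P with hYdef
    have hC : B - A * P = A * Y := by rw [← hAX, ← Matrix.mul_sub]
    have hDpos : (B * Aᴴ - A * P * Aᴴ).PosSemidef := by
      rw [hD', hC, Matrix.mul_assoc]
      rw [← Matrix.mul_assoc]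
      exact hY.mul_mul_conjTranspose_same A
    refine ⟨?_, hDpos⟩
    have hle1 : LinearMap.range (B * Aᴴ - A * P * Aᴴ).mulVecLin
        ≤ LinearMap.range (B - A * P).mulVecLin := by
      rw [hD', Matrix.mulVecLin_mul]
      exact LinearMap.range_comp_le_range _ _
    -- other inclusion via sqrt
    set S := (open scoped MatrixOrder in CFC.sqrt Y) with hS
    have hSS : S * S = Y := by open scoped MatrixOrder in exact CFC.sqrt_mul_sqrt_self Y hY.nonneg
    have hSH : Sᴴ = S := by open scoped MatrixOrder in exact (CFC.sqrt_nonneg Y).posSemidef.1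
    have key : LinearMap.range (A * S).mulVecLin
        = LinearMap.range (B * Aᴴ - A * P * Aᴴ).mulVecLin := by
      rw [← range_mul_conjTranspose_self (A * S)]
      congr 1
      rw [hD', hC, Matrix.conjTranspose_mul, hSH, ← hSS]
      simp [Matrix.mul_assoc]
    have hle2 : LinearMap.range (B - A * P).mulVecLin
        ≤ LinearMap.range (B * Aᴴ - A * P * Aᴴ).mulVecLin := by
      rw [← key, hC, ← hSS, ← Matrix.mul_assoc, Matrix.mulVecLin_mul]
      exact LinearMap.range_comp_le_range _ _
    exact le_antisymm hle2 hle1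
  · rintro ⟨hrange, hDpos⟩
    set C := B - A * P with hCdef
    set D := B * Aᴴ - A * P * Aᴴ with hDdef
    have hDH : D.IsHermitian := hDpos.1
    -- pseudo-inverse of D via spectral theorem
    set U : Matrix (Fin m) (Fin m) ℂ := (hDH.eigenvectorUnitary : Matrix (Fin m) (Fin m) ℂ) with hU
    set l : Fin m → ℂ := fun i => (hDH.eigenvalues i : ℂ) with hl
    have hspec : D = U * Matrix.diagonal l * star U := hDH.spectral_theorem
    have hUU : U * star U = 1 := Matrix.mem_unitaryGroup_iff.mp hDH.eigenvectorUnitary.2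
    have hUU' : star U * U = 1 := Matrix.mem_unitaryGroup_iff'.mp hDH.eigenvectorUnitary.2
    set E : Matrix (Fin m) (Fin m) ℂ := U * Matrix.diagonal (fun i => (l i)⁻¹) * star U with hE
    have hDE : D * E * D = D := by
      rw [hspec, hE]
      calc (U * Matrix.diagonal l * star U) * (U * Matrix.diagonal (fun i => (l i)⁻¹) * star U)
            * (U * Matrix.diagonal l * star U)
          = U * (Matrix.diagonal l * (star U * U) * Matrix.diagonal (fun i => (l i)⁻¹)
            * (star U * U) * Matrix.diagonal l) * star U := by noncomm_ring
        _ = U * (Matrix.diagonal l * Matrix.diagonal (fun i => (l i)⁻¹) * Matrix.diagonal l)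
            * star U := by rw [hUU']; noncomm_ring
        _ = U * Matrix.diagonal l * star U := by
            rw [Matrix.diagonal_mul_diagonal, Matrix.diagonal_mul_diagonal]
            congr 2
            ext i
            by_cases h : l i = 0
            · simp [h]
            · field_simp
    have hEpos : E.PosSemidef := by
      rw [hE]
      have hd : (Matrix.diagonal (fun i => (l i)⁻¹)).PosSemidef := by
        refine Matrix.posSemidef_diagonal_iff.mpr fun i => ?_
        rw [hl]
        simp only [← Complex.ofReal_inv]
        rw [Complex.zero_le_real]
        have := hDpos.eigenvalues_nonneg i
        positivity
      have := hd.mul_mul_conjTranspose_same U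
      simpa [Matrix.star_eq_conjTranspose] using this
    -- D * E * C = C
    have hDEC : D * E * C = C := by
      apply eq_of_mulVec_eq
      intro v
      have hmem : C *ᵥ v ∈ LinearMap.range D.mulVecLin := by
        rw [← hrange]
        exact ⟨v, rfl⟩
      obtain ⟨w, hw⟩ := hmem
      simp only [Matrix.mulVecLin_apply] at hw
      calc (D * E * C) *ᵥ v = (D * E) *ᵥ (C *ᵥ v) := by rw [← Matrix.mulVec_mulVec]
        _ = (D * E) *ᵥ (D *ᵥ w) := by rw [hw]
        _ = (D * E * D) *ᵥ w := by rw [Matrix.mulVec_mulVec]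
        _ = D *ᵥ w := by rw [hDE]
        _ = C *ᵥ v := hw
    -- build the solution
    set Y : Matrix (Fin n) (Fin n) ℂ := Cᴴ * E * C with hY
    have hYpos : Y.PosSemidef := hEpos.conjTranspose_mul_mul_same C
    have hACH : A * Cᴴ = D := by
      rw [show A * Cᴴ = (C * Aᴴ)ᴴ by rw [Matrix.conjTranspose_mul]; simp, ← hD', hDpos.1.eq]
    have hAY : A * Y = C := by
      rw [hY, ← Matrix.mul_assoc, ← Matrix.mul_assoc, hACH]
      rw [Matrix.mul_assoc, ← Matrix.mul_assoc] at hDEC ⊢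
      exact hDEC
    refine ⟨Y + P, hYpos.1.add hP, ?_, by simpa using hYpos⟩
    rw [Matrix.mul_add, hAY, hCdef]
    simp
end
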